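/- arXiv:1806.11367 — 3 statements merged into one kernel-verified Lean document; each statement's English description precedes it below -/
import Mathlib

section
/- Let u₀, u₁, u₂ be continuous weight functions on (0,∞) and let v₁, v₂ be weights on ℝⁿ. Define U₁(r) = sup_{r<t<∞} u₀(t) · (sup_{0<s<t} u₁(s)) and U₂(r) = sup_{0<t<r} u₂(t) for r > 0. Then the inequality sup_{r>0} u₂(r) ∫_{ℝⁿ∖B(0,r)} g(y) v₂(y) dy ≤ C · sup_{r>0} u₁(r) ( sup_{t>r} u₀(t) ∫_{B(0,t)} g(y) v₁(y) dy ) holds with some finite constant C for all nonnegative measurable g on ℝⁿ if and only if I := sup_{r>0} U₂(r) ( U₁(r)^{−1} · ess sup_{y ∈ ℝⁿ∖B(0,r)} v₁(y)^{−1} v₂(y) + ∫_r^∞ ess sup_{y ∈ ℝⁿ∖B(0,t)} ( v₁(y)^{−1} v₂(y) ) d( U₁(t)^{−1} ) ) < ∞, where the integral is a Lebesgue–Stieltjes integral with respect to the nondecreasing function t ↦ U₁(t)^{−1}. Moreover, the best (smallest) constant C in the inequality is equivalent to I, i.e. there exist absolute constants making C ≈ I. -/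
open MeasureTheory ENNReal Set Metric

noncomputable section

abbrev Rn (n : ℕ) : Type := EuclideanSpace ℝ (Fin n)

/-- `v(E) = ∫_E v`. -/
def wMeasure {n : ℕ} (v : Rn n → ℝ) (E : Set (Rn n)) : ℝ≥0∞ :=
  ∫⁻ x in E, ENNReal.ofReal (v x)

/-- `‖f‖_{L_p(Ω,v)}` for an `ℝ≥0∞`-valued `f`. -/
def wLp {n : ℕ} (p : ℝ) (v : Rn n → ℝ) (Ω : Set (Rn n)) (f : Rn n → ℝ≥0∞) : ℝ≥0∞ :=
  (∫⁻ x in Ω, f x ^ p * ENNReal.ofReal (v x)) ^ (1 / p)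

/-- fractional maximal function `M_α f`. -/
def frMax {n : ℕ} (α : ℝ) (f : Rn n → ℝ) (x : Rn n) : ℝ≥0∞ :=
  ⨆ (r : ℝ) (_ : 0 < r),
    volume (ball x r) ^ (α / (n : ℝ) - 1) * ∫⁻ y in ball x r, ENNReal.ofReal (f y)

/-- Riesz potential `I_α f`. -/
def riesz {n : ℕ} (α : ℝ) (f : Rn n → ℝ) (x : Rn n) : ℝ≥0∞ :=
  ∫⁻ y, ENNReal.ofReal (f y) * ENNReal.ofReal (dist x y) ^ (α - (n : ℝ))

/-- the (closed) cube centered at `x₀` with side length `2r`. -/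
def cube {n : ℕ} (x₀ : Rn n) (r : ℝ) : Set (Rn n) := {y | ∀ i, |y i - x₀ i| ≤ r}

/-- a weight: locally integrable, positive a.e. -/
def IsWeight {n : ℕ} (v : Rn n → ℝ) : Prop :=
  LocallyIntegrable v volume ∧ ∀ᵐ x : Rn n ∂volume, 0 < v x

/-- Muckenhoupt `A_∞`. -/
def IsAinfty {n : ℕ} (v : Rn n → ℝ) : Prop :=
  ∃ C : ℝ, 0 < C ∧ ∃ δ : ℝ, 0 < δ ∧ δ ≤ 1 ∧
    ∀ (x₀ : Rn n) (r : ℝ), 0 < r → ∀ E : Set (Rn n), MeasurableSet E → E ⊆ cube x₀ r →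
      wMeasure v E ≤
        ENNReal.ofReal C * (volume E / volume (cube x₀ r)) ^ δ * wMeasure v (cube x₀ r)

/-- reverse doubling of order `β`. -/
def IsRD {n : ℕ} (v : Rn n → ℝ) (β : ℝ) : Prop :=
  ∃ c : ℝ, 0 < c ∧ ∀ (x' x : Rn n) (r' r : ℝ), 0 < r' → 0 < r →
    ball x' r' ⊆ ball x r →
      wMeasure v (ball x' r') ≤
        ENNReal.ofReal c * (volume (ball x' r') / volume (ball x r)) ^ β *
          wMeasure v (ball x r)

/-- The Lebesgue–Stieltjes integral `∫_{(r,∞)} W dG` of a nonincreasing `W : ℝ → ℝ≥0∞`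
with respect to a nondecreasing right-continuous `G : ℝ → ℝ≥0∞`, realized as the
supremum of lower Riemann–Stieltjes sums (with `W` evaluated at right endpoints). -/
def stieltjesIntegralFrom (W G : ℝ → ℝ≥0∞) (r : ℝ) : ℝ≥0∞ :=
  ⨆ (k : ℕ) (t : Fin (k + 1) → ℝ) (_ : StrictMono t) (_ : r ≤ t 0),
    ∑ i : Fin k, W (t i.succ) * (G (t i.succ) - G (t i.castSucc))

/-- `U₁(r) = sup_{r<t<∞} u₀(t) · sup_{0<s<t} u₁(s)`. -/
def U1fun (u₀ u₁ : ℝ → ℝ) (r : ℝ) : ℝ≥0∞ :=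
  ⨆ (t : ℝ) (_ : r < t),
    ENNReal.ofReal (u₀ t) * ⨆ (s : ℝ) (_ : 0 < s) (_ : s < t), ENNReal.ofReal (u₁ s)

/-- `U₂(r) = sup_{0<t<r} u₂(t)`. -/
def U2fun (u₂ : ℝ → ℝ) (r : ℝ) : ℝ≥0∞ :=
  ⨆ (t : ℝ) (_ : 0 < t) (_ : t < r), ENNReal.ofReal (u₂ t)

/-- `W(t) = ess sup_{y ∈ ℝⁿ∖B(0,t)} v₁(y)⁻¹ v₂(y)`. -/
def Wfun {n : ℕ} (v₁ v₂ : Rn n → ℝ) (t : ℝ) : ℝ≥0∞ :=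
  essSup (fun y => (ENNReal.ofReal (v₁ y))⁻¹ * ENNReal.ofReal (v₂ y))
    (volume.restrict ((ball (0 : Rn n) t)ᶜ))

/-- left-hand side of the two-operator inequality. -/
def lhs8 {n : ℕ} (u₂ : ℝ → ℝ) (v₂ : Rn n → ℝ) (g : Rn n → ℝ≥0∞) : ℝ≥0∞ :=
  ⨆ (r : ℝ) (_ : 0 < r),
    ENNReal.ofReal (u₂ r) * ∫⁻ y in (ball (0 : Rn n) r)ᶜ, g y * ENNReal.ofReal (v₂ y)

/-- right-hand side of the two-operator inequality. -/
def rhs8 {n : ℕ} (u₀ u₁ : ℝ → ℝ) (v₁ : Rn n → ℝ) (g : Rn n → ℝ≥0∞) : ℝ≥0∞ :=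
  ⨆ (r : ℝ) (_ : 0 < r),
    ENNReal.ofReal (u₁ r) *
      ⨆ (t : ℝ) (_ : r < t),
        ENNReal.ofReal (u₀ t) * ∫⁻ y in ball (0 : Rn n) t, g y * ENNReal.ofReal (v₁ y)

/-- the constant `I`. -/
def Iconst8 {n : ℕ} (u₀ u₁ u₂ : ℝ → ℝ) (v₁ v₂ : Rn n → ℝ) : ℝ≥0∞ :=
  ⨆ (r : ℝ) (_ : 0 < r),
    U2fun u₂ r *
      ((U1fun u₀ u₁ r)⁻¹ * Wfun v₁ v₂ r +
        stieltjesIntegralFrom (Wfun v₁ v₂) (fun t => (U1fun u₀ u₁ t)⁻¹) r)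


namespace Stmt8Aux

lemma biSup_Iio_self (a : ℝ≥0∞) : ⨆ b ∈ Iio a, b = a := by
  rcases eq_or_ne a 0 with rfl | h
  · simp
  · refine le_antisymm (iSup₂_le fun b hb => hb.le) (le_of_forall_lt fun c hc => ?_)
    obtain ⟨d, hcd, hda⟩ := exists_between hc
    exact hcd.trans_le (le_iSup₂ (f := fun (b : ℝ≥0∞) (_ : b ∈ Iio a) => b) d hda)

lemma tele_sum (a : ℕ → ℝ≥0∞) : ∀ N, (∀ m, m < N → a m ≤ a (m + 1)) →
    ∑ m ∈ Finset.range N, (a (m + 1) - a m) ≤ a N := by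
  intro N
  induction N with
  | zero => simp
  | succ N ih =>
    intro h
    rw [Finset.sum_range_succ]
    calc ∑ m ∈ Finset.range N, (a (m + 1) - a m) + (a (N + 1) - a N)
        ≤ a N + (a (N + 1) - a N) :=
          add_le_add_left (ih fun m hm => h m (hm.trans (Nat.lt_succ_self N))) _
      _ = a (N + 1) := add_tsub_cancel_of_le (h N (Nat.lt_succ_self N))

lemma iSup_mul_iSup_nat (f g : ℕ → ℝ≥0∞) (hf : Monotone f) (hg : Monotone g) :
    (⨆ n, f n) * (⨆ n, g n) = ⨆ n, f n * g n := by
  refine le_antisymm ?_ (iSup_le fun n => mul_le_mul' (le_iSup f n) (le_iSup g n))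
  rw [ENNReal.iSup_mul]
  refine iSup_le fun i => ?_
  rw [ENNReal.mul_iSup]
  refine iSup_le fun j => ?_
  exact le_iSup_of_le (max i j) (mul_le_mul' (hf (le_max_left i j)) (hg (le_max_right i j)))

lemma iSup_min_nat (W : ℝ≥0∞) : (⨆ n : ℕ, min W (n : ℝ≥0∞)) = W := by
  refine le_antisymm (iSup_le fun n => min_le_left _ _) (le_of_forall_lt fun c hc => ?_)
  obtain ⟨m, hm⟩ := ENNReal.exists_nat_gt hc.ne_top
  exact lt_of_lt_of_le (lt_min hc hm) (le_iSup (fun n : ℕ => min W (n : ℝ≥0∞)) m)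

lemma iSup_one_sub_inv : (⨆ n : ℕ, ((1 : ℝ≥0∞) - ((n : ℝ≥0∞) + 2)⁻¹)) = 1 := by
  refine le_antisymm (iSup_le fun n => tsub_le_self) (le_of_forall_lt fun c hc => ?_)
  have h1 : (1 : ℝ≥0∞) - c ≠ 0 := by
    simpa [tsub_eq_zero_iff_le] using hc.not_ge
  obtain ⟨m, hm⟩ := ENNReal.exists_inv_nat_lt h1
  have hle : ((m : ℝ≥0∞) + 2)⁻¹ ≤ ((m : ℝ≥0∞))⁻¹ :=
    ENNReal.inv_le_inv.mpr (le_add_of_nonneg_right (by norm_num))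
  have h2 : ((m : ℝ≥0∞) + 2)⁻¹ < 1 - c := lt_of_le_of_lt hle hm
  have h3 : c < 1 - ((m : ℝ≥0∞) + 2)⁻¹ := by
    rw [lt_tsub_iff_right]
    calc c + ((m : ℝ≥0∞) + 2)⁻¹ < c + (1 - c) := by
          exact ENNReal.add_lt_add_left (by exact fun h => absurd h (by simp [hc.ne_top])) h2
      _ = 1 := add_tsub_cancel_of_le hc.le
  exact h3.trans_le (le_iSup (fun n : ℕ => (1 : ℝ≥0∞) - ((n : ℝ≥0∞) + 2)⁻¹) m)

/-- truncated approximation from below -/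
def trunc (W : ℝ≥0∞) (n : ℕ) : ℝ≥0∞ := min W (n : ℝ≥0∞) * ((1 : ℝ≥0∞) - ((n : ℝ≥0∞) + 2)⁻¹)

lemma trunc_mono (W : ℝ≥0∞) : Monotone (trunc W) := by
  intro a b hab
  refine mul_le_mul' (min_le_min le_rfl (by exact_mod_cast Nat.cast_le.mpr hab)) ?_
  exact tsub_le_tsub le_rfl (ENNReal.inv_le_inv.mpr (by
    exact_mod_cast add_le_add_left (Nat.cast_le.mpr hab) 2))

lemma iSup_trunc (W : ℝ≥0∞) : (⨆ n, trunc W n) = W := by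
  have := iSup_mul_iSup_nat (fun n => min W (n : ℝ≥0∞)) (fun n => (1 : ℝ≥0∞) - ((n : ℝ≥0∞) + 2)⁻¹)
    (fun a b hab => min_le_min le_rfl (by exact_mod_cast Nat.cast_le.mpr hab))
    (fun a b hab => tsub_le_tsub le_rfl (ENNReal.inv_le_inv.mpr (by
      exact_mod_cast add_le_add_left (Nat.cast_le.mpr hab) 2)))
  simp only [trunc]
  rw [← this, iSup_min_nat, iSup_one_sub_inv, mul_one]

lemma trunc_zero_or_lt (W : ℝ≥0∞) (n : ℕ) : trunc W n = 0 ∨ trunc W n < W := by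
  rcases eq_or_ne (min W (n : ℝ≥0∞)) 0 with h0 | h0
  · exact Or.inl (by simp [trunc, h0])
  · refine Or.inr ?_
    have hfin : min W (n : ℝ≥0∞) ≠ ⊤ := ne_top_of_le_ne_top (ENNReal.natCast_ne_top n) (min_le_right _ _)
    calc trunc W n < min W (n : ℝ≥0∞) * 1 := by
          refine ENNReal.mul_lt_mul_iff_right h0 hfin |>.mpr ?_
          exact ENNReal.sub_lt_self one_ne_top one_ne_zero (by simp)
      _ = min W (n : ℝ≥0∞) := mul_one _
      _ ≤ W := min_le_left _ _

lemma ennreal_x_le_two_mul_sub {x y : ℝ≥0∞} (hx : x ≠ ⊤) (h : 2 * y ≤ x) : x ≤ 2 * (x - y) := by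
  have hytop : y ≠ ⊤ := by
    intro hy
    apply hx
    have : (⊤ : ℝ≥0∞) ≤ x := by
      calc (⊤ : ℝ≥0∞) = 2 * ⊤ := by simp
        _ = 2 * y := by rw [hy]
        _ ≤ x := h
    exact top_le_iff.mp this
  have hyx' : y ≤ x := le_trans (le_mul_of_one_le_left (zero_le) one_le_two) h
  have hyx : y ≤ x - y := ENNReal.le_sub_of_add_le_left hytop (by rwa [← two_mul])
  calc x = (x - y) + y := (tsub_add_cancel_of_le hyx').symm
    _ ≤ (x - y) + (x - y) := add_le_add_right hyx _
    _ = 2 * (x - y) := (two_mul _).symm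

lemma lt_two_mul_self_ennreal {x : ℝ≥0∞} (h0 : x ≠ 0) (ht : x ≠ ⊤) : x < 2 * x := by
  rw [two_mul]
  exact ENNReal.lt_add_right ht h0

end Stmt8Aux

namespace Stmt8Aux2
open Stmt8Aux

lemma measure_ball_iSup {n : ℕ} (μ : Measure (Rn n)) (c : ℝ) :
    μ (ball 0 c) = ⨆ m : ℕ, μ (ball 0 (c - 1 / (m + 1))) := by
  have hcover : ball (0 : Rn n) c = ⋃ m : ℕ, ball 0 (c - 1 / (m + 1)) := by
    ext y
    simp only [mem_ball, mem_iUnion]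
    constructor
    · intro h
      obtain ⟨m, hm⟩ := exists_nat_one_div_lt (show (0:ℝ) < c - dist y 0 by linarith)
      exact ⟨m, by push_cast at hm ⊢; linarith⟩
    · rintro ⟨m, hm⟩
      have : (0:ℝ) < 1 / (m + 1) := by positivity
      linarith
  rw [hcover]
  refine Directed.measure_iUnion (Monotone.directed_le fun a b hab => ball_subset_ball ?_)
  have : (1:ℝ) / (b + 1) ≤ 1 / (a + 1) := by
    apply one_div_le_one_div_of_le (by positivity) (by exact_mod_cast by omega)
  linarith

lemma measure_gt_iSup {n : ℕ} (μ : Measure (Rn n)) (c : ℝ) :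
    μ {y : Rn n | c < dist y 0} = ⨆ m : ℕ, μ (ball 0 (c + 1 / (m + 1)))ᶜ := by
  have hcover : {y : Rn n | c < dist y 0} = ⋃ m : ℕ, (ball (0 : Rn n) (c + 1 / (m + 1)))ᶜ := by
    ext y
    simp only [mem_setOf_eq, mem_iUnion, mem_compl_iff, mem_ball, not_lt]
    constructor
    · intro h
      obtain ⟨m, hm⟩ := exists_nat_one_div_lt (show (0:ℝ) < dist y 0 - c by linarith)
      exact ⟨m, by push_cast at hm ⊢; linarith⟩
    · rintro ⟨m, hm⟩
      have : (0:ℝ) < 1 / (m + 1) := by positivity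
      linarith
  rw [hcover]
  refine Directed.measure_iUnion (Monotone.directed_le fun a b hab => compl_subset_compl.mpr (ball_subset_ball ?_))
  have : (1:ℝ) / (b + 1) ≤ 1 / (a + 1) := by
    apply one_div_le_one_div_of_le (by positivity) (by exact_mod_cast by omega)
  linarith

lemma measure_compl_ball_iSup {n : ℕ} (μ : Measure (Rn n)) (b : ℝ) :
    μ (ball 0 b)ᶜ = ⨆ m : ℕ, μ (ball 0 (b + m + 1) \ ball 0 b) := by
  have hcover : (ball (0 : Rn n) b)ᶜ = ⋃ m : ℕ, (ball 0 (b + m + 1) \ ball 0 b) := by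
    ext y
    simp only [mem_compl_iff, mem_ball, not_lt, mem_iUnion, mem_diff]
    constructor
    · intro h
      obtain ⟨m, hm⟩ := exists_nat_gt (dist y 0 - b - 1)
      exact ⟨m, by push_cast at hm ⊢; constructor <;> [linarith; linarith]⟩
    · rintro ⟨m, hm⟩
      exact hm.2
  rw [hcover]
  refine Directed.measure_iUnion (Monotone.directed_le fun a b' hab => ?_)
  exact diff_subset_diff_left (ball_subset_ball (by push_cast; linarith [(by exact_mod_cast hab : (a:ℝ) ≤ b')]))

lemma L1_abstract {n : ℕ} (ν μ' : Measure (Rn n)) (A S : ℝ≥0∞) (W G : ℝ → ℝ≥0∞) (ρ b : ℝ)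
    (hρ : 0 < ρ) (hρb : ρ ≤ b)
    (hGmono : Monotone G) (hGtop : ∀ t, G t ≠ ⊤) (hGb : 0 < G b)
    (hGrc : ∀ s : ℝ, G s = ⨅ (t : ℝ) (_ : s < t), G t)
    (hν : ∀ t : ℝ, 0 < t → ν (ball 0 t) ≤ A * G t)
    (hμν : ∀ a : ℝ, 0 < a → ∀ s : Set (Rn n), MeasurableSet s → s ⊆ (ball 0 a)ᶜ →
      μ' s ≤ W a * ν s)
    (hS : ∀ (k : ℕ) (t : Fin (k + 1) → ℝ), StrictMono t → ρ ≤ t 0 →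
      (∑ i : Fin k, W (t i.succ) * (G (t i.succ) - G (t i.castSucc))) ≤ S) :
    μ' (ball 0 b)ᶜ ≤ 2 * A * (W b * G b) + 4 * A * S := by
  classical
  have hb : 0 < b := lt_of_lt_of_le hρ hρb
  rw [measure_compl_ball_iSup]
  refine iSup_le fun m => ?_
  set T : ℝ := b + m + 1 with hTdef
  have hbT : b < T := by
    have : (0:ℝ) ≤ m := Nat.cast_nonneg m
    simp only [hTdef]; linarith
  set X : ℝ → Set ℝ := fun s => {t | t ≤ T ∧ G t < 2 * G s} with hX
  set F : ℝ → ℝ := fun s => sSup (X s) with hF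
  have key : ∀ s, b ≤ s → s < T → s < F s ∧ F s ≤ T ∧ (∀ t, t < F s → G t < 2 * G s) ∧
      (F s < T → 2 * G s ≤ G (F s)) := by
    intro s hbs hsT
    have hGs0 : G s ≠ 0 := (lt_of_lt_of_le hGb (hGmono hbs)).ne'
    have hGst : G s ≠ ⊤ := hGtop s
    have hsX : s ∈ X s := ⟨hsT.le, lt_two_mul_self_ennreal hGs0 hGst⟩
    have hne : (X s).Nonempty := ⟨s, hsX⟩
    have hbdd : BddAbove (X s) := ⟨T, fun t ht => ht.1⟩
    have hFleT : F s ≤ T := csSup_le hne fun t ht => ht.1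
    have hslt : s < F s := by
      have h1 : (⨅ (t : ℝ) (_ : s < t), G t) < 2 * G s := by
        rw [← hGrc s]; exact lt_two_mul_self_ennreal hGs0 hGst
      rw [iInf_lt_iff] at h1
      obtain ⟨t', ht'⟩ := h1
      rw [iInf_lt_iff] at ht'
      obtain ⟨hst', hGt'⟩ := ht'
      have hmem : min t' ((s + T) / 2) ∈ X s := by
        refine ⟨by
          calc min t' ((s + T) / 2) ≤ (s + T) / 2 := min_le_right _ _
            _ ≤ T := by linarith, ?_⟩
        exact lt_of_le_of_lt (hGmono (min_le_left _ _)) hGt'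
      exact lt_of_lt_of_le (lt_min hst' (by linarith)) (le_csSup hbdd hmem)
    have hlow : ∀ t, t < F s → G t < 2 * G s := by
      intro t ht
      obtain ⟨t', ht'X, htt'⟩ := (lt_csSup_iff hbdd hne).mp ht
      exact lt_of_le_of_lt (hGmono htt'.le) ht'X.2
    have hhigh : F s < T → 2 * G s ≤ G (F s) := by
      intro hFT
      rw [hGrc (F s)]
      refine le_iInf fun t => le_iInf fun htF => ?_
      have h1 : min t T ∉ X s := fun hmem =>
        absurd (le_csSup hbdd hmem) (not_le.mpr (lt_min htF hFT))
      have h3 : 2 * G s ≤ G (min t T) := not_lt.mp fun hc => h1 ⟨min_le_right _ _, hc⟩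
      exact h3.trans (hGmono (min_le_left _ _))
    exact ⟨hslt, hFleT, hlow, hhigh⟩
  set seq : ℕ → ℝ := fun j => Nat.rec b (fun _ s => if s < T then F s else T) j with hseq
  have hseq0 : seq 0 = b := rfl
  have hseqstep : ∀ j, seq (j + 1) = if seq j < T then F (seq j) else T := fun j => rfl
  have hmem : ∀ j, b ≤ seq j ∧ seq j ≤ T := by
    intro j; induction j with
    | zero => exact ⟨le_rfl, hbT.le⟩
    | succ j ih =>
      rw [hseqstep j]
      split_ifs with h
      · obtain ⟨h1, h2, _, _⟩ := key (seq j) ih.1 h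
        exact ⟨le_trans ih.1 h1.le, h2⟩
      · exact ⟨hbT.le, le_rfl⟩
  have hstep : ∀ j, seq j < T → seq j < seq (j + 1) ∧ (∀ t, t < seq (j + 1) →
      G t < 2 * G (seq j)) ∧ (seq (j + 1) < T → 2 * G (seq j) ≤ G (seq (j + 1))) := by
    intro j hj
    rw [hseqstep j, if_pos hj]
    obtain ⟨h1, _, h3, h4⟩ := key (seq j) (hmem j).1 hj
    exact ⟨h1, h3, h4⟩
  have hterm : ∃ j, seq j = T := by
    by_contra hc
    push_neg at hc
    have hlt : ∀ j, seq j < T := fun j => lt_of_le_of_ne (hmem j).2 (hc j)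
    have hpow : ∀ j, 2 ^ j * G b ≤ G (seq j) := by
      intro j; induction j with
      | zero => simp [hseq0]
      | succ j ih =>
        calc 2 ^ (j + 1) * G b = 2 * (2 ^ j * G b) := by ring
          _ ≤ 2 * G (seq j) := mul_le_mul_right ih 2
          _ ≤ G (seq (j + 1)) := (hstep j (hlt j)).2.2 (hlt (j + 1))
    have hGbne : G b ≠ 0 := hGb.ne'
    obtain ⟨k, hk⟩ := ENNReal.exists_nat_gt ((ENNReal.div_lt_top (hGtop T) hGbne).ne)
    have h2k : G T < 2 ^ k * G b := by
      rw [← ENNReal.div_lt_iff (Or.inl hGbne) (Or.inl (hGtop b))]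
      calc G T / G b < k := hk
        _ ≤ 2 ^ k := by exact_mod_cast (Nat.lt_two_pow_self (n := k)).le
    have hle : 2 ^ k * G b ≤ G T := (hpow k).trans (hGmono (hmem k).2)
    exact absurd (lt_of_lt_of_le h2k hle) (lt_irrefl _)
  set K := Nat.find hterm with hKdef
  have hKT : seq K = T := Nat.find_spec hterm
  have hKlt : ∀ j, j < K → seq j < T := fun j hj =>
    lt_of_le_of_ne (hmem j).2 (Nat.find_min hterm hj)
  have hK0 : K ≠ 0 := by
    intro h
    rw [h, hseq0] at hKT
    exact hbT.ne hKT
  have hsum : ∀ j, j ≤ K → μ' (ball 0 (seq j) \ ball 0 b) ≤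
      ∑ i ∈ Finset.range j, W (seq i) * (2 * (A * G (seq i))) := by
    intro j
    induction j with
    | zero => intro _; simp [hseq0]
    | succ j ih =>
      intro hjK
      have hjK' : j < K := hjK
      have hjT : seq j < T := hKlt j hjK'
      have hsub : ball (0 : Rn n) (seq (j + 1)) \ ball 0 b ⊆
          (ball 0 (seq j) \ ball 0 b) ∪ (ball 0 (seq (j + 1)) \ ball 0 (seq j)) := by
        intro y hy
        by_cases h : y ∈ ball 0 (seq j)
        · exact Or.inl ⟨h, hy.2⟩
        · exact Or.inr ⟨hy.1, h⟩
      have hann : μ' (ball 0 (seq (j + 1)) \ ball 0 (seq j)) ≤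
          W (seq j) * (2 * (A * G (seq j))) := by
        have h0j : 0 < seq j := lt_of_lt_of_le hb (hmem j).1
        have h1 := hμν (seq j) h0j (ball (0 : Rn n) (seq (j + 1)) \ ball 0 (seq j))
          (measurableSet_ball.diff measurableSet_ball) (fun y hy => hy.2)
        have h2 : ν (ball 0 (seq (j + 1)) \ ball 0 (seq j)) ≤ 2 * (A * G (seq j)) := by
          refine le_trans (measure_mono diff_subset) ?_
          rw [measure_ball_iSup]
          refine iSup_le fun m' => ?_
          rcases le_or_gt (seq (j + 1) - 1 / (m' + 1)) 0 with h | h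
          · rw [ball_eq_empty.mpr h]; simp
          · have htlt : seq (j + 1) - 1 / (m' + 1) < seq (j + 1) := by
              have : (0:ℝ) < 1 / (m' + 1) := by positivity
              linarith
            calc ν (ball 0 (seq (j + 1) - 1 / (m' + 1))) ≤ A * G (seq (j + 1) - 1 / (m' + 1)) :=
                hν _ h
              _ ≤ A * (2 * G (seq j)) :=
                mul_le_mul_right ((hstep j hjT).2.1 _ htlt).le A
              _ = 2 * (A * G (seq j)) := by ring
        calc μ' (ball 0 (seq (j + 1)) \ ball 0 (seq j)) ≤
            W (seq j) * ν (ball 0 (seq (j + 1)) \ ball 0 (seq j)) := h1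
          _ ≤ W (seq j) * (2 * (A * G (seq j))) := mul_le_mul_right h2 _
      calc μ' (ball 0 (seq (j + 1)) \ ball 0 b)
          ≤ μ' (ball 0 (seq j) \ ball 0 b) + μ' (ball 0 (seq (j + 1)) \ ball 0 (seq j)) :=
            le_trans (measure_mono hsub) (measure_union_le _ _)
        _ ≤ (∑ i ∈ Finset.range j, W (seq i) * (2 * (A * G (seq i)))) +
              W (seq j) * (2 * (A * G (seq j))) := add_le_add (ih hjK'.le) hann
        _ = ∑ i ∈ Finset.range (j + 1), W (seq i) * (2 * (A * G (seq i))) :=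
            (Finset.sum_range_succ _ _).symm
  have hmain := hsum K le_rfl
  rw [hKT] at hmain
  have hKsucc : K = (K - 1) + 1 := (Nat.succ_pred_eq_of_ne_zero hK0).symm
  have hsplit : ∑ i ∈ Finset.range K, W (seq i) * (2 * (A * G (seq i))) =
      (∑ i ∈ Finset.range (K - 1), W (seq (i + 1)) * (2 * (A * G (seq (i + 1))))) +
        W (seq 0) * (2 * (A * G (seq 0))) := by
    conv_lhs => rw [hKsucc]
    exact Finset.sum_range_succ' _ _
  have hshift : ∀ i ∈ Finset.range (K - 1), W (seq (i + 1)) * (2 * (A * G (seq (i + 1)))) ≤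
      4 * A * (W (seq (i + 1)) * (G (seq (i + 1)) - G (seq i))) := by
    intro i hi
    rw [Finset.mem_range] at hi
    have h1 : seq i < T := hKlt i (by omega)
    have h2 : seq (i + 1) < T := hKlt (i + 1) (by omega)
    have hdb : 2 * G (seq i) ≤ G (seq (i + 1)) := (hstep i h1).2.2 h2
    have hx := ennreal_x_le_two_mul_sub (hGtop (seq (i + 1))) hdb
    calc W (seq (i + 1)) * (2 * (A * G (seq (i + 1)))) ≤
        W (seq (i + 1)) * (2 * (A * (2 * (G (seq (i + 1)) - G (seq i))))) :=
          mul_le_mul_right (mul_le_mul_right (mul_le_mul_right hx A) 2) _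
      _ = 4 * A * (W (seq (i + 1)) * (G (seq (i + 1)) - G (seq i))) := by ring
  have hsm : ∀ c, c ≤ K → ∀ a, a < c → seq a < seq c := by
    intro c
    induction c with
    | zero => intro _ a ha; omega
    | succ c ih =>
      intro hcK a ha
      have hc : seq c < seq (c + 1) := (hstep c (hKlt c (by omega))).1
      rcases Nat.lt_succ_iff_lt_or_eq.mp ha with h | h
      · exact lt_trans (ih (by omega) a h) hc
      · rw [h]; exact hc
  have hpart : (∑ i ∈ Finset.range (K - 1), W (seq (i + 1)) * (G (seq (i + 1)) - G (seq i))) ≤ S := by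
    have hSapp := hS (K - 1) (fun i : Fin (K - 1 + 1) => seq i.val) ?_ ?_
    · calc (∑ i ∈ Finset.range (K - 1), W (seq (i + 1)) * (G (seq (i + 1)) - G (seq i)))
          = ∑ i : Fin (K - 1), W (seq (i.val + 1)) * (G (seq (i.val + 1)) - G (seq i.val)) :=
            (Fin.sum_univ_eq_sum_range (fun i => W (seq (i + 1)) * (G (seq (i + 1)) - G (seq i))) (K - 1)).symm
        _ ≤ S := by
            refine le_trans (le_of_eq (Finset.sum_congr rfl fun i _ => ?_)) hSapp
            simp [Fin.val_succ, Fin.coe_castSucc]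
    · intro i j hij
      exact hsm j.val (by omega) i.val hij
    · exact hρb
  calc μ' (ball 0 (b + m + 1) \ ball 0 b)
      ≤ ∑ i ∈ Finset.range K, W (seq i) * (2 * (A * G (seq i))) := hmain
    _ = (∑ i ∈ Finset.range (K - 1), W (seq (i + 1)) * (2 * (A * G (seq (i + 1))))) +
          W (seq 0) * (2 * (A * G (seq 0))) := hsplit
    _ ≤ (∑ i ∈ Finset.range (K - 1), 4 * A * (W (seq (i + 1)) * (G (seq (i + 1)) - G (seq i)))) +
          2 * A * (W b * G b) := by
        refine add_le_add (Finset.sum_le_sum hshift) (le_of_eq ?_)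
        rw [hseq0]; ring
    _ = 4 * A * (∑ i ∈ Finset.range (K - 1), W (seq (i + 1)) * (G (seq (i + 1)) - G (seq i))) +
          2 * A * (W b * G b) := by rw [Finset.mul_sum]
    _ ≤ 4 * A * S + 2 * A * (W b * G b) := by
        exact add_le_add_left (mul_le_mul_right hpart _) _
    _ = 2 * A * (W b * G b) + 4 * A * S := by ring

end Stmt8Aux2

namespace Stmt8Aux2
open Stmt8Aux

lemma ML_abstract {n : ℕ} (hn : 1 ≤ n) (ν μ' : Measure (Rn n)) (A S : ℝ≥0∞) (W G : ℝ → ℝ≥0∞)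
    (ρ : ℝ) (hρ : 0 < ρ)
    (hGmono : Monotone G) (hGtop : ∀ t, G t ≠ ⊤)
    (hGrc : ∀ s : ℝ, G s = ⨅ (t : ℝ) (_ : s < t), G t)
    (hν : ∀ t : ℝ, 0 < t → ν (ball 0 t) ≤ A * G t)
    (hμν : ∀ a : ℝ, 0 < a → ∀ s : Set (Rn n), MeasurableSet s → s ⊆ (ball 0 a)ᶜ →
      μ' s ≤ W a * ν s)
    (hμ0 : ∀ s : Set (Rn n), MeasurableSet s → ν s = 0 → μ' s = 0)
    (hμvol : μ' ≪ volume)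
    (hS : ∀ (k : ℕ) (t : Fin (k + 1) → ℝ), StrictMono t → ρ ≤ t 0 →
      (∑ i : Fin k, W (t i.succ) * (G (t i.succ) - G (t i.castSucc))) ≤ S) :
    μ' (ball 0 ρ)ᶜ ≤ 8 * A * (G ρ * W ρ + S) := by
  rcases eq_or_ne (G ρ) 0 with hGρ | hGρ
  · set Z := {t : ℝ | G t = 0} with hZ
    by_cases hbdd : BddAbove Z
    · set τ := sSup Z with hτ
      have hρZ : ρ ∈ Z := hGρ
      have hρτ : ρ ≤ τ := le_csSup hbdd hρZ
      have hZlt : ∀ t, t < τ → G t = 0 := by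
        intro t ht
        obtain ⟨t', ht'Z, htt'⟩ := (lt_csSup_iff hbdd ⟨ρ, hρZ⟩).mp ht
        exact le_antisymm (le_trans (hGmono htt'.le) (le_of_eq ht'Z)) (zero_le)
      have hντ : ν (ball 0 τ) = 0 := by
        rw [measure_ball_iSup]
        refine le_antisymm (iSup_le fun m => ?_) (zero_le)
        rcases le_or_gt (τ - 1 / (m + 1)) 0 with h | h
        · rw [ball_eq_empty.mpr h]; simp
        · have h1 : τ - 1 / (m + 1) < τ := by
            have : (0:ℝ) < 1 / (m + 1) := by positivity
            linarith
          calc ν (ball 0 (τ - 1 / (m + 1))) ≤ A * G (τ - 1 / (m + 1)) := hν _ h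
            _ = 0 := by rw [hZlt _ h1, mul_zero]
      have hμτ : μ' (ball 0 τ) = 0 := hμ0 _ measurableSet_ball hντ
      have hμs : μ' (sphere 0 τ) = 0 := by
        refine hμvol ?_
        haveI : Nonempty (Fin n) := ⟨⟨0, hn⟩⟩
        exact Measure.addHaar_sphere volume 0 τ
      have hsub : (ball (0:Rn n) ρ)ᶜ ⊆ ball 0 τ ∪ (sphere 0 τ ∪ {y | τ < dist y 0}) := by
        intro y _
        rcases lt_trichotomy (dist y 0) τ with h | h | h
        · exact Or.inl (by simpa [mem_ball] using h)
        · exact Or.inr (Or.inl (by simpa [mem_sphere] using h))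
        · exact Or.inr (Or.inr h)
      have htail : μ' {y : Rn n | τ < dist y 0} ≤ 6 * A * S := by
        rw [measure_gt_iSup]
        refine iSup_le fun m => ?_
        have hpos : (0:ℝ) < 1 / (m + 1) := by positivity
        have hτbm : τ < τ + 1 / (m + 1) := by linarith
        set bm : ℝ := τ + 1 / (m + 1) with hbm
        have hGbm : G bm ≠ 0 := fun h => absurd (le_csSup hbdd h) (not_le.mpr hτbm)
        have hρbm : ρ ≤ bm := le_trans hρτ hτbm.le
        have hL1 := L1_abstract ν μ' A S W G ρ bm hρ hρbm hGmono hGtop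
          (pos_iff_ne_zero.mpr hGbm) hGrc hν hμν hS
        have hWGS : W bm * G bm ≤ S := by
          have hsm : StrictMono ![ρ, bm] := by
            intro i j hij
            fin_cases i <;> fin_cases j
            · exact absurd hij (lt_irrefl _)
            · simpa using lt_of_le_of_lt hρτ hτbm
            · exact absurd hij (by simp [Fin.lt_def])
            · exact absurd hij (lt_irrefl _)
          have h0 : ρ ≤ (![ρ, bm]) 0 := by simp
          have := hS 1 ![ρ, bm] hsm h0
          simpa [Fin.sum_univ_one, hGρ] using this
        calc μ' (ball 0 bm)ᶜ ≤ 2 * A * (W bm * G bm) + 4 * A * S := hL1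
          _ ≤ 2 * A * S + 4 * A * S := add_le_add_left (mul_le_mul_right hWGS _) _
          _ = 6 * A * S := by ring
      calc μ' (ball 0 ρ)ᶜ
          ≤ μ' (ball 0 τ) + (μ' (sphere 0 τ) + μ' {y : Rn n | τ < dist y 0}) :=
            le_trans (measure_mono hsub)
              (le_trans (measure_union_le _ _) (add_le_add_right (measure_union_le _ _) _))
        _ ≤ 0 + (0 + 6 * A * S) :=
            add_le_add (le_of_eq hμτ) (add_le_add (le_of_eq hμs) htail)
        _ ≤ 8 * A * (G ρ * W ρ + S) := by
            rw [hGρ, zero_mul, zero_add, zero_add, zero_add]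
            calc 6 * A * S ≤ 8 * A * S := by
                  exact mul_le_mul_left (mul_le_mul_left (by norm_num) A) S
              _ = 8 * A * S := rfl
    · have hG0 : ∀ t : ℝ, G t = 0 := by
        intro t
        rw [not_bddAbove_iff] at hbdd
        obtain ⟨t', ht'Z, htt'⟩ := hbdd t
        exact le_antisymm ((hGmono htt'.le).trans (le_of_eq ht'Z)) (zero_le)
      have hνall : ∀ m : ℕ, ν (ball 0 ((m:ℝ) + 1)) = 0 := fun m =>
        le_antisymm (by simpa [hG0] using hν ((m:ℝ) + 1) (by positivity)) (zero_le)
      have hcover : (univ : Set (Rn n)) = ⋃ m : ℕ, ball 0 ((m:ℝ) + 1) := by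
        ext y
        simp only [mem_univ, true_iff, mem_iUnion, mem_ball]
        obtain ⟨m, hm⟩ := exists_nat_gt (dist y 0)
        exact ⟨m, by linarith⟩
      have hνuniv : ν (univ : Set (Rn n)) = 0 := by
        rw [hcover]
        refine le_antisymm (le_trans (measure_iUnion_le _) ?_) (zero_le)
        simp [hνall]
      have hfin : μ' (ball 0 ρ)ᶜ = 0 :=
        hμ0 _ measurableSet_ball.compl
          (le_antisymm (le_trans (measure_mono (subset_univ _)) hνuniv.le) (zero_le))
      simp [hfin]
  · have hL1 := L1_abstract ν μ' A S W G ρ ρ hρ le_rfl hGmono hGtop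
      (pos_iff_ne_zero.mpr hGρ) hGrc hν hμν hS
    calc μ' (ball 0 ρ)ᶜ ≤ 2 * A * (W ρ * G ρ) + 4 * A * S := hL1
      _ ≤ 8 * A * (G ρ * W ρ) + 8 * A * S := by
          refine add_le_add ?_ (mul_le_mul_left (mul_le_mul_left (by norm_num) A) S)
          rw [mul_comm (W ρ)]
          exact mul_le_mul_left (mul_le_mul_left (by norm_num) A) _
      _ = 8 * A * (G ρ * W ρ + S) := by ring

end Stmt8Aux2

namespace Stmt8Ctx
open Stmt8Aux Stmt8Aux2

lemma U1_pos (u₀ u₁ : ℝ → ℝ) (h₀p : ∀ t ∈ Ioi (0:ℝ), 0 < u₀ t)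
    (h₁p : ∀ t ∈ Ioi (0:ℝ), 0 < u₁ t) (r : ℝ) : 0 < U1fun u₀ u₁ r := by
  have hmax : r ≤ max r 0 := le_max_left r 0
  have hmax0 : (0:ℝ) ≤ max r 0 := le_max_right r 0
  set t : ℝ := max r 0 + 1 with ht
  have hrt : r < t := by simp only [ht]; linarith
  have ht0 : 0 < t := by simp only [ht]; linarith
  have hinner : ENNReal.ofReal (u₁ (t / 2)) ≤
      ⨆ (s : ℝ) (_ : 0 < s) (_ : s < t), ENNReal.ofReal (u₁ s) :=
    le_iSup_of_le (t / 2) (le_iSup_of_le (by linarith) (le_iSup_of_le (by linarith) le_rfl))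
  have hterm : 0 < ENNReal.ofReal (u₀ t) * ENNReal.ofReal (u₁ (t / 2)) :=
    ENNReal.mul_pos (ENNReal.ofReal_pos.mpr (h₀p t ht0)).ne'
      (ENNReal.ofReal_pos.mpr (h₁p (t / 2) (by simp; linarith))).ne'
  refine lt_of_lt_of_le hterm ?_
  exact le_iSup_of_le t (le_iSup_of_le hrt (mul_le_mul_right hinner _))

lemma U1_anti (u₀ u₁ : ℝ → ℝ) : Antitone (U1fun u₀ u₁) := fun a b hab =>
  iSup₂_le fun t ht => le_iSup₂_of_le t (lt_of_le_of_lt hab ht) le_rfl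

lemma U1_rc (u₀ u₁ : ℝ → ℝ) (r : ℝ) :
    U1fun u₀ u₁ r = ⨆ (r' : ℝ) (_ : r < r'), U1fun u₀ u₁ r' := by
  refine le_antisymm (iSup₂_le fun t ht => ?_) (iSup₂_le fun r' hr' => U1_anti u₀ u₁ hr'.le)
  exact le_iSup₂_of_le ((r + t) / 2) (by linarith)
    (le_iSup₂_of_le t (by linarith) le_rfl)

lemma G_rc (u₀ u₁ : ℝ → ℝ) (s : ℝ) :
    (U1fun u₀ u₁ s)⁻¹ = ⨅ (t : ℝ) (_ : s < t), (U1fun u₀ u₁ t)⁻¹ := by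
  conv_lhs => rw [U1_rc u₀ u₁ s]
  simp_rw [ENNReal.inv_iSup]

lemma Wfun_congr {n : ℕ} (v₁ v₂ : Rn n → ℝ) (w' : Rn n → ℝ≥0∞)
    (hw : (fun y => (ENNReal.ofReal (v₁ y))⁻¹ * ENNReal.ofReal (v₂ y)) =ᵐ[volume] w') (t : ℝ) :
    Wfun v₁ v₂ t = essSup w' (volume.restrict (ball (0 : Rn n) t)ᶜ) :=
  essSup_congr_ae hw.restrict

lemma ae_le_Wfun {n : ℕ} (v₁ v₂ : Rn n → ℝ) (w' : Rn n → ℝ≥0∞)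
    (hw : (fun y => (ENNReal.ofReal (v₁ y))⁻¹ * ENNReal.ofReal (v₂ y)) =ᵐ[volume] w') (t : ℝ) :
    ∀ᵐ y ∂(volume.restrict (ball (0 : Rn n) t)ᶜ), w' y ≤ Wfun v₁ v₂ t := by
  rw [Wfun_congr v₁ v₂ w' hw t]
  exact ENNReal.ae_le_essSup w'

lemma superlevel_pos {n : ℕ} (v₁ v₂ : Rn n → ℝ) (w' : Rn n → ℝ≥0∞)
    (hw : (fun y => (ENNReal.ofReal (v₁ y))⁻¹ * ENNReal.ofReal (v₂ y)) =ᵐ[volume] w')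
    (τ : ℝ) (M : ℝ≥0∞) (hM : M < Wfun v₁ v₂ τ) :
    0 < volume ({y : Rn n | M < w' y} ∩ (ball (0 : Rn n) τ)ᶜ) := by
  by_contra h
  push_neg at h
  rw [le_zero_iff] at h
  have hae : ∀ᵐ y ∂(volume.restrict (ball (0 : Rn n) τ)ᶜ), w' y ≤ M := by
    rw [ae_restrict_iff' measurableSet_ball.compl, ae_iff]
    refine measure_mono_null (fun y hy => ?_) h
    simp only [mem_setOf_eq, Classical.not_imp, not_le] at hy
    exact ⟨hy.2, hy.1⟩
  have hle : Wfun v₁ v₂ τ ≤ M := by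
    rw [Wfun_congr v₁ v₂ w' hw τ]
    exact essSup_le_of_ae_le M hae
  exact absurd hM (not_lt.mpr hle)

lemma exists_good_set {n : ℕ} (hn : 1 ≤ n) (w' : Rn n → ℝ≥0∞) (hw'm : Measurable w')
    (τ : ℝ) (M : ℝ≥0∞)
    (h : M = 0 ∨ 0 < volume ({y : Rn n | M < w' y} ∩ (ball (0 : Rn n) τ)ᶜ)) :
    ∃ E : Set (Rn n), MeasurableSet E ∧ E ⊆ (ball 0 τ)ᶜ ∧ 0 < volume E ∧ volume E < ⊤ ∧
      ∀ y ∈ E, M ≤ w' y := by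
  haveI : Nonempty (Fin n) := ⟨⟨0, hn⟩⟩
  rcases h with rfl | h
  · set p : Rn n := EuclideanSpace.single (⟨0, hn⟩ : Fin n) (|τ| + 1) with hp
    have hnorm : ‖p‖ = |τ| + 1 := by
      rw [hp, EuclideanSpace.norm_single]
      simp [abs_of_nonneg (by positivity : (0:ℝ) ≤ |τ| + 1)]
    refine ⟨ball p (1/4), measurableSet_ball, fun y hy => ?_, measure_ball_pos _ _ (by norm_num),
      measure_ball_lt_top, fun y _ => zero_le⟩
    simp only [mem_compl_iff, mem_ball, not_lt]
    have h1 : dist y p < 1/4 := mem_ball.mp hy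
    have h2 : ‖p‖ - ‖y‖ ≤ dist y p := by
      rw [dist_comm, dist_eq_norm]
      exact norm_sub_norm_le p y
    rw [dist_zero_right]
    rw [hnorm] at h2
    have h3 := le_abs_self τ
    linarith
  · set F := {y : Rn n | M < w' y} ∩ (ball (0 : Rn n) τ)ᶜ with hF
    have hFm : MeasurableSet F :=
      (measurableSet_lt measurable_const hw'm).inter measurableSet_ball.compl
    have hcover : F ⊆ ⋃ m : ℕ, F ∩ ball 0 ((m:ℝ) + 1) := by
      intro y hy
      obtain ⟨m, hm⟩ := exists_nat_gt (dist y 0)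
      exact mem_iUnion.mpr ⟨m, hy, by simp only [mem_ball]; linarith⟩
    have hex : ∃ m : ℕ, 0 < volume (F ∩ ball 0 ((m:ℝ) + 1)) := by
      by_contra hc
      push_neg at hc
      have : volume F = 0 := by
        refine le_antisymm (le_trans (measure_mono hcover) ?_) (zero_le)
        refine le_trans (measure_iUnion_le _) ?_
        simp only [nonpos_iff_eq_zero]
        exact ENNReal.tsum_eq_zero.mpr fun m => le_antisymm (hc m) (zero_le)
      exact absurd this h.ne'
    obtain ⟨m, hm⟩ := hex
    refine ⟨F ∩ ball 0 ((m:ℝ) + 1), hFm.inter measurableSet_ball,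
      fun y hy => hy.1.2, hm, lt_of_le_of_lt (measure_mono inter_subset_right) measure_ball_lt_top,
      fun y hy => hy.1.1.le⟩

end Stmt8Ctx

namespace Stmt8Main
open Stmt8Aux Stmt8Aux2 Stmt8Ctx

lemma upper_bound {n : ℕ} (hn : 1 ≤ n) (u₀ u₁ u₂ : ℝ → ℝ)
    (h₀p : ∀ t ∈ Ioi (0:ℝ), 0 < u₀ t) (h₁p : ∀ t ∈ Ioi (0:ℝ), 0 < u₁ t)
    (v₁ v₂ : Rn n → ℝ) (hv₁ : IsWeight v₁) (hv₂ : IsWeight v₂)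
    (g : Rn n → ℝ≥0∞) (hg : Measurable g) (hA : rhs8 u₀ u₁ v₁ g ≠ ⊤) :
    lhs8 u₂ v₂ g ≤ 8 * rhs8 u₀ u₁ v₁ g * Iconst8 u₀ u₁ u₂ v₁ v₂ := by
  classical
  haveI : Nonempty (Fin n) := ⟨⟨0, hn⟩⟩
  obtain ⟨v₁', hv₁'m, hv₁'ae⟩ : ∃ f : Rn n → ℝ, Measurable f ∧ v₁ =ᵐ[volume] f := by
    have h := hv₁.1.aestronglyMeasurable
    exact ⟨h.mk v₁, h.stronglyMeasurable_mk.measurable, h.ae_eq_mk⟩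
  obtain ⟨v₂', hv₂'m, hv₂'ae⟩ : ∃ f : Rn n → ℝ, Measurable f ∧ v₂ =ᵐ[volume] f := by
    have h := hv₂.1.aestronglyMeasurable
    exact ⟨h.mk v₂, h.stronglyMeasurable_mk.measurable, h.ae_eq_mk⟩
  set w' : Rn n → ℝ≥0∞ := fun y => (ENNReal.ofReal (v₁' y))⁻¹ * ENNReal.ofReal (v₂' y)
    with hw'def
  have hw'm : Measurable w' :=
    ((ENNReal.measurable_ofReal.comp hv₁'m).inv).mul (ENNReal.measurable_ofReal.comp hv₂'m)
  have hw : (fun y => (ENNReal.ofReal (v₁ y))⁻¹ * ENNReal.ofReal (v₂ y)) =ᵐ[volume] w' := by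
    filter_upwards [hv₁'ae, hv₂'ae] with y h1 h2
    simp only [hw'def, h1, h2]
  set f₁ : Rn n → ℝ≥0∞ := fun y => g y * ENNReal.ofReal (v₁' y) with hf₁def
  have hf₁m : Measurable f₁ := hg.mul (ENNReal.measurable_ofReal.comp hv₁'m)
  set ν : Measure (Rn n) := volume.withDensity f₁ with hνdef
  set μ' : Measure (Rn n) := volume.withDensity (fun y => f₁ y * w' y) with hμ'def
  set μ₂ : Measure (Rn n) := volume.withDensity (fun y => g y * ENNReal.ofReal (v₂' y))
    with hμ₂def
  set A := rhs8 u₀ u₁ v₁ g with hAdef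
  set G : ℝ → ℝ≥0∞ := fun t => (U1fun u₀ u₁ t)⁻¹ with hGdef
  set W : ℝ → ℝ≥0∞ := Wfun v₁ v₂ with hWdef
  have hGmono : Monotone G := fun a b hab => ENNReal.inv_le_inv.mpr (U1_anti u₀ u₁ hab)
  have hGtop : ∀ t, G t ≠ ⊤ := fun t =>
    ENNReal.inv_ne_top.mpr (U1_pos u₀ u₁ h₀p h₁p t).ne'
  have hGrc : ∀ s : ℝ, G s = ⨅ (t : ℝ) (_ : s < t), G t := G_rc u₀ u₁
  -- ν of balls expressed via v₁
  have hν_ball : ∀ c : ℝ, ν (ball 0 c) = ∫⁻ y in ball 0 c, g y * ENNReal.ofReal (v₁ y) := by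
    intro c
    rw [hνdef, withDensity_apply _ measurableSet_ball]
    refine lintegral_congr_ae ?_
    filter_upwards [hv₁'ae.restrict] with y hy
    rw [hf₁def]
    simp [hy]
  -- bound on U1 * ν(ball)
  have hh : ∀ (t s t' : ℝ), 0 < s → s < t' → t ≤ t' →
      ENNReal.ofReal (u₀ t') * ENNReal.ofReal (u₁ s) * ν (ball 0 t) ≤ A := by
    intro t s t' hs hst' htt'
    have hmono : ν (ball 0 t) ≤ ∫⁻ y in ball 0 t', g y * ENNReal.ofReal (v₁ y) := by
      rw [← hν_ball t']
      exact measure_mono (ball_subset_ball htt')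
    calc ENNReal.ofReal (u₀ t') * ENNReal.ofReal (u₁ s) * ν (ball 0 t)
        ≤ ENNReal.ofReal (u₀ t') * ENNReal.ofReal (u₁ s) *
            ∫⁻ y in ball 0 t', g y * ENNReal.ofReal (v₁ y) := mul_le_mul_right hmono _
      _ = ENNReal.ofReal (u₁ s) * (ENNReal.ofReal (u₀ t') *
            ∫⁻ y in ball 0 t', g y * ENNReal.ofReal (v₁ y)) := by ring
      _ ≤ ENNReal.ofReal (u₁ s) * ⨆ (tt : ℝ) (_ : s < tt),
            ENNReal.ofReal (u₀ tt) * ∫⁻ y in ball 0 tt, g y * ENNReal.ofReal (v₁ y) := by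
          refine mul_le_mul_right ?_ _
          exact le_iSup_of_le t' (le_iSup_of_le hst' le_rfl)
      _ ≤ A := by
          rw [hAdef, rhs8]
          exact le_iSup₂_of_le s hs le_rfl
  have hνA : ∀ t : ℝ, 0 < t → ν (ball 0 t) ≤ A * G t := by
    intro t ht
    have hU1 : U1fun u₀ u₁ t * ν (ball 0 t) ≤ A := by
      rw [U1fun, ENNReal.iSup_mul]
      refine iSup_le fun t' => ?_
      rw [ENNReal.iSup_mul]
      refine iSup_le fun htt' => ?_
      simp only [ENNReal.mul_iSup, ENNReal.iSup_mul]
      refine iSup_le fun s => iSup_le fun hs => iSup_le fun hst' => ?_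
      refine le_trans (le_of_eq ?_) (hh t s t' hs hst' htt'.le)
      ring
    rcases eq_or_ne (U1fun u₀ u₁ t) ⊤ with htop | htop
    · have hν0 : ν (ball 0 t) = 0 := by
        by_contra h0
        rw [htop, ENNReal.top_mul h0] at hU1
        exact hA (top_le_iff.mp hU1)
      simp [hν0]
    · calc ν (ball 0 t) = (U1fun u₀ u₁ t)⁻¹ * (U1fun u₀ u₁ t * ν (ball 0 t)) := by
            rw [← mul_assoc, ENNReal.inv_mul_cancel (U1_pos u₀ u₁ h₀p h₁p t).ne' htop, one_mul]
        _ ≤ (U1fun u₀ u₁ t)⁻¹ * A := mul_le_mul_right hU1 _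
        _ = A * G t := by rw [hGdef, mul_comm]
  have hμν : ∀ a : ℝ, 0 < a → ∀ s : Set (Rn n), MeasurableSet s → s ⊆ (ball 0 a)ᶜ →
      μ' s ≤ W a * ν s := by
    intro a _ s hs hsub
    rw [hμ'def, hνdef, withDensity_apply _ hs, withDensity_apply _ hs]
    have hae := ae_restrict_of_ae_restrict_of_subset hsub (ae_le_Wfun v₁ v₂ w' hw a)
    calc ∫⁻ y in s, f₁ y * w' y ≤ ∫⁻ y in s, W a * f₁ y := by
          refine lintegral_mono_ae ?_
          filter_upwards [hae] with y hy
          rw [mul_comm]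
          exact mul_le_mul_left hy _
      _ = W a * ∫⁻ y in s, f₁ y := lintegral_const_mul _ hf₁m
  have hμ0 : ∀ s : Set (Rn n), MeasurableSet s → ν s = 0 → μ' s = 0 := by
    intro s hs h0
    rw [hνdef, withDensity_apply _ hs] at h0
    have hz : f₁ =ᵐ[volume.restrict s] 0 := (lintegral_eq_zero_iff hf₁m).mp h0
    rw [hμ'def, withDensity_apply _ hs]
    calc ∫⁻ y in s, f₁ y * w' y = ∫⁻ y in s, 0 := by
          refine lintegral_congr_ae ?_
          filter_upwards [hz] with y hy
          simp only [Pi.zero_apply] at hy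
          simp [hy]
      _ = 0 := lintegral_zero
  have hμvol : μ' ≪ volume := withDensity_absolutelyContinuous _ _
  have hμ₂eq : μ₂ = μ' := by
    rw [hμ₂def, hμ'def]
    refine withDensity_congr_ae ?_
    filter_upwards [hv₁'ae, hv₂'ae, hv₁.2] with y h1 h2 hpos
    have h0 : ENNReal.ofReal (v₁' y) ≠ 0 := by
      rw [← h1]
      exact (ENNReal.ofReal_pos.mpr hpos).ne'
    rw [hf₁def, hw'def]
    simp only
    calc g y * ENNReal.ofReal (v₂' y)
        = g y * ((ENNReal.ofReal (v₁' y) * (ENNReal.ofReal (v₁' y))⁻¹) * ENNReal.ofReal (v₂' y)) := by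
          rw [ENNReal.mul_inv_cancel h0 ENNReal.ofReal_ne_top, one_mul]
      _ = g y * ENNReal.ofReal (v₁' y) * ((ENNReal.ofReal (v₁' y))⁻¹ * ENNReal.ofReal (v₂' y)) := by
          ring
  -- main per-radius bound
  have hball : ∀ ρ : ℝ, 0 < ρ → μ₂ (ball 0 ρ)ᶜ ≤
      8 * A * (G ρ * W ρ + stieltjesIntegralFrom W G ρ) := by
    intro ρ hρ
    rw [hμ₂eq]
    refine ML_abstract hn ν μ' A (stieltjesIntegralFrom W G ρ) W G ρ hρ hGmono hGtop hGrc hνA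
      hμν hμ0 hμvol ?_
    intro k t h1 h2
    rw [stieltjesIntegralFrom]
    exact le_iSup_of_le k (le_iSup_of_le t (le_iSup_of_le h1 (le_iSup_of_le h2 le_rfl)))
  have hμ₂c : ∀ s : Set (Rn n), MeasurableSet s →
      μ₂ s = ∫⁻ y in s, g y * ENNReal.ofReal (v₂ y) := by
    intro s hs
    rw [hμ₂def, withDensity_apply _ hs]
    refine lintegral_congr_ae ?_
    filter_upwards [hv₂'ae.restrict] with y hy
    rw [hy]
  have hμ₂sph : ∀ c : ℝ, μ₂ (sphere (0 : Rn n) c) = 0 := by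
    intro c
    refine withDensity_absolutelyContinuous _ _ ?_
    exact Measure.addHaar_sphere volume 0 c
  rw [lhs8]
  refine iSup_le fun r => iSup_le fun hr => ?_
  rw [← hμ₂c _ measurableSet_ball.compl]
  have hsplit : μ₂ (ball (0 : Rn n) r)ᶜ ≤ μ₂ {y : Rn n | r < dist y 0} := by
    have hsub : (ball (0 : Rn n) r)ᶜ ⊆ sphere 0 r ∪ {y : Rn n | r < dist y 0} := by
      intro y hy
      simp only [mem_compl_iff, mem_ball, not_lt] at hy
      rcases eq_or_lt_of_le hy with h | h
      · exact Or.inl (show y ∈ sphere (0 : Rn n) r by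
          simp only [mem_sphere]
          exact h.symm)
      · exact Or.inr (show r < dist y 0 from h)
    calc μ₂ (ball (0 : Rn n) r)ᶜ ≤ μ₂ (sphere 0 r) + μ₂ {y : Rn n | r < dist y 0} :=
        le_trans (measure_mono hsub) (measure_union_le _ _)
      _ = μ₂ {y : Rn n | r < dist y 0} := by rw [hμ₂sph, zero_add]
  refine le_trans (mul_le_mul_right hsplit _) ?_
  rw [measure_gt_iSup, ENNReal.mul_iSup]
  refine iSup_le fun m => ?_
  have hpos : (0:ℝ) < 1 / (m + 1) := by positivity
  have hρr : r < r + 1 / (m + 1) := by linarith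
  have hρ0 : 0 < r + 1 / (m + 1) := by linarith
  set ρ : ℝ := r + 1 / (m + 1) with hρdef
  calc ENNReal.ofReal (u₂ r) * μ₂ (ball 0 ρ)ᶜ
      ≤ U2fun u₂ ρ * μ₂ (ball 0 ρ)ᶜ := by
        refine mul_le_mul_left ?_ _
        rw [U2fun]
        exact le_iSup_of_le r (le_iSup_of_le hr (le_iSup_of_le hρr le_rfl))
    _ ≤ U2fun u₂ ρ * (8 * A * (G ρ * W ρ + stieltjesIntegralFrom W G ρ)) :=
        mul_le_mul_right (hball ρ hρ0) _
    _ = 8 * A * (U2fun u₂ ρ * (G ρ * W ρ + stieltjesIntegralFrom W G ρ)) := by ring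
    _ ≤ 8 * A * Iconst8 u₀ u₁ u₂ v₁ v₂ := by
        refine mul_le_mul_right ?_ _
        rw [Iconst8]
        exact le_iSup₂_of_le ρ hρ0 le_rfl

end Stmt8Main

namespace Stmt8Main
open Stmt8Aux Stmt8Aux2 Stmt8Ctx

lemma ind_int_ball {n : ℕ} (v₁ v₁' : Rn n → ℝ) (hv₁'ae : v₁ =ᵐ[volume] v₁')
    (hpos : ∀ᵐ y ∂(volume : Measure (Rn n)), 0 < v₁ y)
    (E : Set (Rn n)) (hE : MeasurableSet E) (s : Set (Rn n)) (hs : MeasurableSet s) :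
    ∫⁻ y in s, (E.indicator (fun z => (ENNReal.ofReal (v₁' z))⁻¹) y) * ENNReal.ofReal (v₁ y)
      = volume (E ∩ s) := by
  have hrw : ∀ y, (E.indicator (fun z => (ENNReal.ofReal (v₁' z))⁻¹) y) * ENNReal.ofReal (v₁ y)
      = E.indicator (fun z => (ENNReal.ofReal (v₁' z))⁻¹ * ENNReal.ofReal (v₁ z)) y := by
    intro y
    exact (Set.indicator_mul_left (M₀ := ℝ≥0∞) E (fun z => (ENNReal.ofReal (v₁' z))⁻¹)
      (fun z => ENNReal.ofReal (v₁ z))).symm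
  rw [lintegral_congr hrw, lintegral_indicator hE, Measure.restrict_restrict hE]
  calc ∫⁻ y in E ∩ s, (ENNReal.ofReal (v₁' y))⁻¹ * ENNReal.ofReal (v₁ y)
      = ∫⁻ _ in E ∩ s, 1 := by
        refine lintegral_congr_ae ?_
        filter_upwards [ae_restrict_of_ae (hv₁'ae.and hpos)] with y hy
        rw [← hy.1]
        exact ENNReal.inv_mul_cancel (ENNReal.ofReal_pos.mpr hy.2).ne' ENNReal.ofReal_ne_top
    _ = volume (E ∩ s) := setLIntegral_one _

lemma ind_int_w {n : ℕ} (v₁' v₂ v₂' : Rn n → ℝ) (hv₂'ae : v₂ =ᵐ[volume] v₂')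
    (E : Set (Rn n)) (hE : MeasurableSet E) (s : Set (Rn n)) (hEs : E ⊆ s) :
    ∫⁻ y in s, (E.indicator (fun z => (ENNReal.ofReal (v₁' z))⁻¹) y) * ENNReal.ofReal (v₂ y)
      = ∫⁻ y in E, (ENNReal.ofReal (v₁' y))⁻¹ * ENNReal.ofReal (v₂' y) := by
  have hrw : ∀ y, (E.indicator (fun z => (ENNReal.ofReal (v₁' z))⁻¹) y) * ENNReal.ofReal (v₂ y)
      = E.indicator (fun z => (ENNReal.ofReal (v₁' z))⁻¹ * ENNReal.ofReal (v₂ z)) y := by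
    intro y
    exact (Set.indicator_mul_left (M₀ := ℝ≥0∞) E (fun z => (ENNReal.ofReal (v₁' z))⁻¹)
      (fun z => ENNReal.ofReal (v₂ z))).symm
  rw [lintegral_congr hrw, lintegral_indicator hE, Measure.restrict_restrict hE,
    inter_eq_self_of_subset_left hEs]
  refine lintegral_congr_ae ?_
  filter_upwards [hv₂'ae.restrict] with y hy
  rw [hy]

lemma lower_bound {n : ℕ} (hn : 1 ≤ n) (u₀ u₁ u₂ : ℝ → ℝ)
    (h₀p : ∀ t ∈ Ioi (0:ℝ), 0 < u₀ t) (h₁p : ∀ t ∈ Ioi (0:ℝ), 0 < u₁ t)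
    (v₁ v₂ : Rn n → ℝ) (hv₁ : IsWeight v₁) (hv₂ : IsWeight v₂) (C : ℝ≥0∞)
    (hC : ∀ g : Rn n → ℝ≥0∞, Measurable g → lhs8 u₂ v₂ g ≤ C * rhs8 u₀ u₁ v₁ g) :
    Iconst8 u₀ u₁ u₂ v₁ v₂ ≤ 2 * C := by
  classical
  haveI : Nonempty (Fin n) := ⟨⟨0, hn⟩⟩
  obtain ⟨v₁', hv₁'m, hv₁'ae⟩ : ∃ f : Rn n → ℝ, Measurable f ∧ v₁ =ᵐ[volume] f := by
    have h := hv₁.1.aestronglyMeasurable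
    exact ⟨h.mk v₁, h.stronglyMeasurable_mk.measurable, h.ae_eq_mk⟩
  obtain ⟨v₂', hv₂'m, hv₂'ae⟩ : ∃ f : Rn n → ℝ, Measurable f ∧ v₂ =ᵐ[volume] f := by
    have h := hv₂.1.aestronglyMeasurable
    exact ⟨h.mk v₂, h.stronglyMeasurable_mk.measurable, h.ae_eq_mk⟩
  set w' : Rn n → ℝ≥0∞ := fun y => (ENNReal.ofReal (v₁' y))⁻¹ * ENNReal.ofReal (v₂' y)
    with hw'def
  have hinvm : Measurable (fun z => (ENNReal.ofReal (v₁' z))⁻¹) :=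
    (ENNReal.measurable_ofReal.comp hv₁'m).inv
  have hw'm : Measurable w' :=
    hinvm.mul (ENNReal.measurable_ofReal.comp hv₂'m)
  have hw : (fun y => (ENNReal.ofReal (v₁ y))⁻¹ * ENNReal.ofReal (v₂ y)) =ᵐ[volume] w' := by
    filter_upwards [hv₁'ae, hv₂'ae] with y h1 h2
    simp only [hw'def, h1, h2]
  rw [Iconst8]
  refine iSup_le fun r => iSup_le fun hr => ?_
  rw [mul_add, two_mul]
  refine add_le_add ?_ ?_
  -- PART A
  · rw [U2fun]
    simp only [ENNReal.iSup_mul]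
    refine iSup_le fun s => iSup_le fun hs => iSup_le fun hsr => ?_
    rcases eq_or_ne ((U1fun u₀ u₁ r)⁻¹) 0 with hG0 | hG0
    · simp [hG0]
    have hU1top : U1fun u₀ u₁ r ≠ ⊤ := by
      intro h
      rw [h] at hG0
      simp at hG0
    conv_lhs => rw [← biSup_Iio_self (Wfun v₁ v₂ r)]
    simp only [ENNReal.mul_iSup]
    refine iSup_le fun M => iSup_le fun hM => ?_
    obtain ⟨E, hEm, hEr, hE0, hEt, hEw⟩ := exists_good_set hn w' hw'm r M
      (Or.inr (superlevel_pos v₁ v₂ w' hw r M hM))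
    set gE : Rn n → ℝ≥0∞ := E.indicator (fun z => (ENNReal.ofReal (v₁' z))⁻¹) with hgEdef
    have hgEm : Measurable gE := Measurable.indicator hinvm hEm
    have hEs : E ⊆ (ball (0 : Rn n) s)ᶜ :=
      subset_trans hEr (compl_subset_compl.mpr (ball_subset_ball hsr.le))
    have hlhs : ENNReal.ofReal (u₂ s) * (M * volume E) ≤ lhs8 u₂ v₂ gE := by
      rw [lhs8]
      refine le_iSup_of_le s (le_iSup_of_le hs (mul_le_mul_right ?_ _))
      rw [hgEdef, ind_int_w v₁' v₂ v₂' hv₂'ae E hEm _ hEs]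
      calc M * volume E = ∫⁻ _ in E, M := (setLIntegral_const E M).symm
        _ ≤ ∫⁻ y in E, w' y := setLIntegral_mono hw'm fun y hy => hEw y hy
        _ = ∫⁻ y in E, (ENNReal.ofReal (v₁' y))⁻¹ * ENNReal.ofReal (v₂' y) := rfl
    have hrhs : rhs8 u₀ u₁ v₁ gE ≤ U1fun u₀ u₁ r * volume E := by
      rw [rhs8]
      refine iSup_le fun ρ => iSup_le fun hρ0 => ?_
      rw [ENNReal.mul_iSup]
      refine iSup_le fun t' => ?_
      rw [ENNReal.mul_iSup]
      refine iSup_le fun hρt' => ?_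
      rw [hgEdef, ind_int_ball v₁ v₁' hv₁'ae hv₁.2 E hEm _ measurableSet_ball]
      rcases eq_or_ne (volume (E ∩ ball 0 t')) 0 with h0 | h0
      · simp [h0]
      obtain ⟨y, hyE, hyB⟩ := nonempty_of_measure_ne_zero h0
      have hrt' : r < t' := by
        have h1 : r ≤ dist y 0 := not_lt.mp (fun hc => hEr hyE (mem_ball.mp hc))
        exact lt_of_le_of_lt h1 (mem_ball.mp hyB)
      calc ENNReal.ofReal (u₁ ρ) * (ENNReal.ofReal (u₀ t') * volume (E ∩ ball 0 t'))
          ≤ ENNReal.ofReal (u₁ ρ) * (ENNReal.ofReal (u₀ t') * volume E) :=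
            mul_le_mul_right (mul_le_mul_right (measure_mono inter_subset_left) _) _
        _ = (ENNReal.ofReal (u₀ t') * ENNReal.ofReal (u₁ ρ)) * volume E := by ring
        _ ≤ (ENNReal.ofReal (u₀ t') *
              ⨆ (ss : ℝ) (_ : 0 < ss) (_ : ss < t'), ENNReal.ofReal (u₁ ss)) * volume E := by
            refine mul_le_mul_left (mul_le_mul_right ?_ _) _
            exact le_iSup_of_le ρ (le_iSup_of_le hρ0 (le_iSup_of_le hρt' le_rfl))
        _ ≤ U1fun u₀ u₁ r * volume E := by
            refine mul_le_mul_left ?_ _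
            rw [U1fun]
            exact le_iSup_of_le t' (le_iSup_of_le hrt' le_rfl)
    have hchain : (ENNReal.ofReal (u₂ s) * M) * volume E ≤ (C * U1fun u₀ u₁ r) * volume E := by
      calc (ENNReal.ofReal (u₂ s) * M) * volume E
          = ENNReal.ofReal (u₂ s) * (M * volume E) := by ring
        _ ≤ lhs8 u₂ v₂ gE := hlhs
        _ ≤ C * rhs8 u₀ u₁ v₁ gE := hC gE hgEm
        _ ≤ C * (U1fun u₀ u₁ r * volume E) := mul_le_mul_right hrhs _
        _ = (C * U1fun u₀ u₁ r) * volume E := by ring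
    have hkey : ENNReal.ofReal (u₂ s) * M ≤ C * U1fun u₀ u₁ r :=
      (ENNReal.mul_le_mul_iff_left hE0.ne' hEt.ne).mp hchain
    calc ENNReal.ofReal (u₂ s) * ((U1fun u₀ u₁ r)⁻¹ * M)
        = (ENNReal.ofReal (u₂ s) * M) * (U1fun u₀ u₁ r)⁻¹ := by ring
      _ ≤ (C * U1fun u₀ u₁ r) * (U1fun u₀ u₁ r)⁻¹ := mul_le_mul_left hkey _
      _ = C * (U1fun u₀ u₁ r * (U1fun u₀ u₁ r)⁻¹) := by ring
      _ ≤ C * 1 := mul_le_mul_right (ENNReal.mul_inv_le_one _) _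
      _ = C := mul_one C
  -- PART B
  · rw [U2fun]
    simp only [ENNReal.iSup_mul]
    refine iSup_le fun s => iSup_le fun hs => iSup_le fun hsr => ?_
    rw [stieltjesIntegralFrom]
    rw [ENNReal.mul_iSup]
    refine iSup_le fun k => ?_
    rw [ENNReal.mul_iSup]
    refine iSup_le fun t => ?_
    rw [ENNReal.mul_iSup]
    refine iSup_le fun hstm => ?_
    rw [ENNReal.mul_iSup]
    refine iSup_le fun hrt0 => ?_
    set G : ℝ → ℝ≥0∞ := fun τ => (U1fun u₀ u₁ τ)⁻¹ with hGdef
    set b : Fin k → ℝ≥0∞ := fun i => G (t i.succ) - G (t i.castSucc) with hbdef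
    have hbtop : ∀ i, b i ≠ ⊤ := fun i =>
      ne_top_of_le_ne_top (ENNReal.inv_ne_top.mpr (U1_pos u₀ u₁ h₀p h₁p (t i.succ)).ne')
        tsub_le_self
    have hsum_eq : ∑ i : Fin k, Wfun v₁ v₂ (t i.succ) * b i
        = ⨆ nn : ℕ, ∑ i : Fin k, trunc (Wfun v₁ v₂ (t i.succ)) nn * b i := by
      rw [← ENNReal.finsetSum_iSup_of_monotone
        (f := fun i nn => trunc (Wfun v₁ v₂ (t i.succ)) nn * b i)
        (fun i a c hac => mul_le_mul_left (trunc_mono _ hac) _)]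
      refine Finset.sum_congr rfl fun i _ => ?_
      conv_rhs => rw [← ENNReal.iSup_mul, iSup_trunc]
    rw [hsum_eq, ENNReal.mul_iSup]
    refine iSup_le fun nn => ?_
    set M : Fin k → ℝ≥0∞ := fun i => trunc (Wfun v₁ v₂ (t i.succ)) nn with hMdef
    have hEx : ∀ i : Fin k, ∃ E : Set (Rn n), MeasurableSet E ∧ E ⊆ (ball 0 (t i.succ))ᶜ ∧
        0 < volume E ∧ volume E < ⊤ ∧ ∀ y ∈ E, M i ≤ w' y := by
      intro i
      refine exists_good_set hn w' hw'm (t i.succ) (M i) ?_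
      rcases trunc_zero_or_lt (Wfun v₁ v₂ (t i.succ)) nn with h | h
      · exact Or.inl h
      · exact Or.inr (superlevel_pos v₁ v₂ w' hw _ _ h)
    choose E hEm hEsub hE0 hEt hEw using hEx
    set gT : Rn n → ℝ≥0∞ := fun y => ∑ i : Fin k,
      (b i / volume (E i)) * (E i).indicator (fun z => (ENNReal.ofReal (v₁' z))⁻¹) y
      with hgTdef
    have hgTm : Measurable gT := by
      refine Finset.measurable_sum _ fun i _ => ?_
      exact (Measurable.indicator hinvm (hEm i)).const_mul _
    have hrt : ∀ i : Fin k, r ≤ t i.succ := by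
      intro i
      calc r ≤ t 0 := hrt0
        _ ≤ t i.succ := hstm.monotone (Fin.zero_le _)
    have hci : ∀ i : Fin k, b i / volume (E i) ≠ ⊤ :=
      fun i => (ENNReal.div_lt_top (hbtop i) (hE0 i).ne').ne
    have hsplit : ∀ (vv : Rn n → ℝ) (s' : Set (Rn n)),
        AEMeasurable (fun y => ENNReal.ofReal (vv y)) (volume.restrict s') →
        ∫⁻ y in s', gT y * ENNReal.ofReal (vv y) = ∑ i : Fin k, (b i / volume (E i)) *
          ∫⁻ y in s', (E i).indicator (fun z => (ENNReal.ofReal (v₁' z))⁻¹) y *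
            ENNReal.ofReal (vv y) := by
      intro vv s' hvv
      have hpt : ∀ y, gT y * ENNReal.ofReal (vv y) = ∑ i : Fin k,
          (b i / volume (E i)) * ((E i).indicator (fun z => (ENNReal.ofReal (v₁' z))⁻¹) y *
            ENNReal.ofReal (vv y)) := by
        intro y
        rw [hgTdef]
        rw [Finset.sum_mul]
        exact Finset.sum_congr rfl fun i _ => mul_assoc _ _ _
      rw [lintegral_congr hpt, lintegral_finset_sum' Finset.univ (f := fun i y => (b i / volume (E i)) *
        ((E i).indicator (fun z => (ENNReal.ofReal (v₁' z))⁻¹) y * ENNReal.ofReal (vv y))) (fun i _ =>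
        (((Measurable.indicator hinvm (hEm i)).aemeasurable.mul hvv)).const_mul _)]
      exact Finset.sum_congr rfl fun i _ => lintegral_const_mul' _ _ (hci i)
    have haev₂ : ∀ s' : Set (Rn n),
        AEMeasurable (fun y => ENNReal.ofReal (v₂ y)) (volume.restrict s') := by
      intro s'
      refine (ENNReal.measurable_ofReal.comp hv₂'m).aemeasurable.congr ?_
      filter_upwards [hv₂'ae.restrict] with y hy
      simp only [Function.comp_apply]
      rw [hy]
    have haev₁ : ∀ s' : Set (Rn n),
        AEMeasurable (fun y => ENNReal.ofReal (v₁ y)) (volume.restrict s') := by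
      intro s'
      refine (ENNReal.measurable_ofReal.comp hv₁'m).aemeasurable.congr ?_
      filter_upwards [hv₁'ae.restrict] with y hy
      simp only [Function.comp_apply]
      rw [hy]
    -- lower bound for lhs
    have hlhsT : ENNReal.ofReal (u₂ s) * ∑ i : Fin k, M i * b i ≤ lhs8 u₂ v₂ gT := by
      rw [lhs8]
      refine le_iSup_of_le s (le_iSup_of_le hs (mul_le_mul_right ?_ _))
      rw [hsplit v₂ _ (haev₂ _)]
      refine Finset.sum_le_sum fun i _ => ?_
      have hEsi : E i ⊆ (ball (0 : Rn n) s)ᶜ :=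
        subset_trans (hEsub i)
          (compl_subset_compl.mpr (ball_subset_ball (le_trans hsr.le (hrt i))))
      rw [ind_int_w v₁' v₂ v₂' hv₂'ae (E i) (hEm i) _ hEsi]
      have h1 : M i * volume (E i) ≤
          ∫⁻ y in E i, (ENNReal.ofReal (v₁' y))⁻¹ * ENNReal.ofReal (v₂' y) := by
        calc M i * volume (E i) = ∫⁻ _ in E i, M i := (setLIntegral_const _ _).symm
          _ ≤ ∫⁻ y in E i, w' y := setLIntegral_mono hw'm fun y hy => hEw i y hy
      have hcancel : (b i / volume (E i)) * (M i * volume (E i)) = M i * b i := by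
        rw [div_eq_mul_inv]
        calc (b i * (volume (E i))⁻¹) * (M i * volume (E i))
            = (M i * b i) * ((volume (E i))⁻¹ * volume (E i)) := by ring
          _ = M i * b i := by
              rw [ENNReal.inv_mul_cancel (hE0 i).ne' (hEt i).ne, mul_one]
      rw [← hcancel]
      exact mul_le_mul_right h1 _
    have hrhsT : rhs8 u₀ u₁ v₁ gT ≤ 1 := by
      rw [rhs8]
      refine iSup_le fun ρ => iSup_le fun hρ0 => ?_
      rw [ENNReal.mul_iSup]
      refine iSup_le fun t' => ?_
      rw [ENNReal.mul_iSup]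
      refine iSup_le fun hρt' => ?_
      have hsplit₁ : ∫⁻ y in ball 0 t', gT y * ENNReal.ofReal (v₁ y)
          = ∑ i : Fin k, (b i / volume (E i)) * volume (E i ∩ ball 0 t') := by
        rw [hsplit v₁ _ (haev₁ _)]
        refine Finset.sum_congr rfl fun i _ => ?_
        rw [ind_int_ball v₁ v₁' hv₁'ae hv₁.2 (E i) (hEm i) _ measurableSet_ball]
      rw [hsplit₁]
      set Jset := Finset.univ.filter
        (fun i : Fin k => volume (E i ∩ ball (0 : Rn n) t') ≠ 0) with hJdef
      have hmemJ : ∀ i : Fin k, volume (E i ∩ ball (0 : Rn n) t') ≠ 0 → i ∈ Jset := by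
        intro i hne
        rw [hJdef]
        exact Finset.mem_filter.mpr ⟨Finset.mem_univ i, hne⟩
      rcases Finset.eq_empty_or_nonempty Jset with hJ | hJ
      · have hzero : ∑ i : Fin k, (b i / volume (E i)) * volume (E i ∩ ball (0 : Rn n) t') = 0 := by
          refine Finset.sum_eq_zero fun i _ => ?_
          have h0 : volume (E i ∩ ball (0 : Rn n) t') = 0 := by
            by_contra hne
            exact absurd (hmemJ i hne) (by rw [hJ]; exact Finset.notMem_empty i)
          rw [h0, mul_zero]
        rw [hzero, mul_zero, mul_zero]
        exact zero_le_one
      · set j := Jset.max' hJ with hjdef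
        have hjJ : j ∈ Jset := Jset.max'_mem hJ
        have htlt : ∀ i ∈ Jset, t i.succ < t' := by
          intro i hi
          obtain ⟨y, hyE, hyB⟩ := nonempty_of_measure_ne_zero (Finset.mem_filter.mp hi).2
          have h1 : t i.succ ≤ dist y 0 := not_lt.mp (fun hc => hEsub i hyE (mem_ball.mp hc))
          exact lt_of_le_of_lt h1 (mem_ball.mp hyB)
        set a : ℕ → ℝ≥0∞ :=
          fun m => G (t ⟨min m k, lt_of_le_of_lt (min_le_right m k) (Nat.lt_succ_self k)⟩)
          with hadef
        have ha_eq : ∀ (m : ℕ) (i' : Fin (k + 1)), min m k = i'.val → a m = G (t i') := by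
          intro m i' h
          rw [hadef]
          exact congrArg (fun z => G (t z)) (Fin.ext h)
        have hbi : ∀ i : Fin k, b i = a (i.val + 1) - a i.val := by
          intro i
          rw [ha_eq (i.val + 1) i.succ (by simp [Nat.min_eq_left (Nat.succ_le_of_lt i.isLt)]),
            ha_eq i.val i.castSucc (by simp [Nat.min_eq_left i.isLt.le])]
        have hamono : ∀ m, m < j.val + 1 → a m ≤ a (m + 1) := by
          intro m _
          rw [hadef]
          refine ENNReal.inv_le_inv.mpr (U1_anti u₀ u₁ (hstm.monotone ?_))
          simp only [Fin.mk_le_mk]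
          exact min_le_min (Nat.le_succ m) le_rfl
        have hsum_le : ∑ i : Fin k, (b i / volume (E i)) * volume (E i ∩ ball (0 : Rn n) t')
            ≤ G (t j.succ) := by
          calc ∑ i : Fin k, (b i / volume (E i)) * volume (E i ∩ ball (0 : Rn n) t')
              = ∑ i ∈ Jset, (b i / volume (E i)) * volume (E i ∩ ball (0 : Rn n) t') := by
                refine (Finset.sum_subset (by rw [hJdef]; exact Finset.filter_subset _ _) ?_).symm
                intro i _ hiJ
                have h0 : volume (E i ∩ ball (0 : Rn n) t') = 0 := by
                  by_contra hne
                  exact hiJ (hmemJ i hne)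
                rw [h0, mul_zero]
            _ ≤ ∑ i ∈ Jset, b i := by
                refine Finset.sum_le_sum fun i _ => ?_
                calc (b i / volume (E i)) * volume (E i ∩ ball (0 : Rn n) t')
                    ≤ (b i / volume (E i)) * volume (E i) :=
                      mul_le_mul_right (measure_mono inter_subset_left) _
                  _ = b i := ENNReal.div_mul_cancel (hE0 i).ne' (hEt i).ne
            _ = ∑ m ∈ Jset.image Fin.val, (a (m + 1) - a m) := by
                rw [Finset.sum_image (fun x _ y _ h => Fin.val_injective h)]
                exact Finset.sum_congr rfl fun i _ => hbi i
            _ ≤ ∑ m ∈ Finset.range (j.val + 1), (a (m + 1) - a m) := by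
                refine Finset.sum_le_sum_of_subset ?_
                intro m hm
                obtain ⟨i, hiJ, rfl⟩ := Finset.mem_image.mp hm
                rw [Finset.mem_range]
                have : i ≤ j := Finset.le_max' Jset i hiJ
                omega
            _ ≤ a (j.val + 1) := tele_sum a (j.val + 1) (fun m hm => hamono m hm)
            _ = G (t j.succ) :=
                ha_eq (j.val + 1) j.succ (by simp [Nat.min_eq_left (Nat.succ_le_of_lt j.isLt)])
        calc ENNReal.ofReal (u₁ ρ) * (ENNReal.ofReal (u₀ t') *
              ∑ i : Fin k, (b i / volume (E i)) * volume (E i ∩ ball (0 : Rn n) t'))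
            ≤ ENNReal.ofReal (u₁ ρ) * (ENNReal.ofReal (u₀ t') * G (t j.succ)) :=
              mul_le_mul_right (mul_le_mul_right hsum_le _) _
          _ = (ENNReal.ofReal (u₀ t') * ENNReal.ofReal (u₁ ρ)) * G (t j.succ) := by ring
          _ ≤ U1fun u₀ u₁ (t j.succ) * G (t j.succ) := by
              refine mul_le_mul_left ?_ _
              rw [U1fun]
              refine le_iSup_of_le t' (le_iSup_of_le (htlt j hjJ) ?_)
              refine mul_le_mul_right ?_ _
              refine le_iSup_of_le ρ ?_
              refine le_iSup_of_le hρ0 ?_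
              exact le_iSup_of_le hρt' le_rfl
          _ ≤ 1 := ENNReal.mul_inv_le_one _
    calc ENNReal.ofReal (u₂ s) * ∑ i : Fin k, M i * b i ≤ lhs8 u₂ v₂ gT := hlhsT
      _ ≤ C * rhs8 u₀ u₁ v₁ gT := hC gT hgTm
      _ ≤ C * 1 := mul_le_mul_right hrhsT _
      _ = C := mul_one C

end Stmt8Main

open Stmt8Aux Stmt8Aux2 Stmt8Ctx Stmt8Main

/-- Theorem 5.1: characterization of the two-operator weighted norm
inequality, together with the two-sided estimate for the best constant. -/
theorem stmt8 (n : ℕ) (hn : 1 ≤ n) (u₀ u₁ u₂ : ℝ → ℝ)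
    (h₀c : ContinuousOn u₀ (Ioi 0)) (h₀p : ∀ t ∈ Ioi (0 : ℝ), 0 < u₀ t)
    (h₁c : ContinuousOn u₁ (Ioi 0)) (h₁p : ∀ t ∈ Ioi (0 : ℝ), 0 < u₁ t)
    (h₂c : ContinuousOn u₂ (Ioi 0)) (h₂p : ∀ t ∈ Ioi (0 : ℝ), 0 < u₂ t)
    (v₁ v₂ : Rn n → ℝ) (hv₁ : IsWeight v₁) (hv₂ : IsWeight v₂) :
    ((∃ C : ℝ≥0∞, C ≠ ⊤ ∧ ∀ g : Rn n → ℝ≥0∞, Measurable g →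
        lhs8 u₂ v₂ g ≤ C * rhs8 u₀ u₁ v₁ g) ↔ Iconst8 u₀ u₁ u₂ v₁ v₂ ≠ ⊤) ∧
      ∃ c₁ c₂ : ℝ≥0∞, 0 < c₁ ∧ c₂ ≠ ⊤ ∧
        c₁ * Iconst8 u₀ u₁ u₂ v₁ v₂ ≤
            sInf {C : ℝ≥0∞ | ∀ g : Rn n → ℝ≥0∞, Measurable g →
              lhs8 u₂ v₂ g ≤ C * rhs8 u₀ u₁ v₁ g} ∧
          sInf {C : ℝ≥0∞ | ∀ g : Rn n → ℝ≥0∞, Measurable g →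
              lhs8 u₂ v₂ g ≤ C * rhs8 u₀ u₁ v₁ g} ≤ c₂ * Iconst8 u₀ u₁ u₂ v₁ v₂ := by
  classical
  have hup : ∀ ε : ℝ≥0∞, 0 < ε → ∀ g : Rn n → ℝ≥0∞, Measurable g →
      lhs8 u₂ v₂ g ≤ (8 * Iconst8 u₀ u₁ u₂ v₁ v₂ + ε) * rhs8 u₀ u₁ v₁ g := by
    intro ε hε g hg
    rcases eq_or_ne (rhs8 u₀ u₁ v₁ g) ⊤ with htop | htop
    · rw [htop, ENNReal.mul_top (lt_of_lt_of_le hε le_add_self).ne']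
      exact le_top
    · calc lhs8 u₂ v₂ g ≤ 8 * rhs8 u₀ u₁ v₁ g * Iconst8 u₀ u₁ u₂ v₁ v₂ :=
          upper_bound hn u₀ u₁ u₂ h₀p h₁p v₁ v₂ hv₁ hv₂ g hg htop
        _ = (8 * Iconst8 u₀ u₁ u₂ v₁ v₂) * rhs8 u₀ u₁ v₁ g := by ring
        _ ≤ (8 * Iconst8 u₀ u₁ u₂ v₁ v₂ + ε) * rhs8 u₀ u₁ v₁ g :=
          mul_le_mul_left le_self_add _
  constructor
  · constructor
    · rintro ⟨C, hCt, hC⟩ hI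
      have h2 := lower_bound hn u₀ u₁ u₂ h₀p h₁p v₁ v₂ hv₁ hv₂ C hC
      rw [hI] at h2
      exact (ENNReal.mul_ne_top (by norm_num) hCt) (top_le_iff.mp h2)
    · intro hI
      refine ⟨8 * Iconst8 u₀ u₁ u₂ v₁ v₂ + 1, ?_, hup 1 one_pos⟩
      exact ENNReal.add_ne_top.mpr ⟨ENNReal.mul_ne_top (by norm_num) hI, one_ne_top⟩
  · refine ⟨2⁻¹, 8, ENNReal.inv_pos.mpr (by norm_num), by norm_num, ?_, ?_⟩
    · refine le_sInf fun C hC => ?_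
      have h2 := lower_bound hn u₀ u₁ u₂ h₀p h₁p v₁ v₂ hv₁ hv₂ C hC
      calc 2⁻¹ * Iconst8 u₀ u₁ u₂ v₁ v₂ ≤ 2⁻¹ * (2 * C) := mul_le_mul_right h2 _
        _ = C := by
            rw [← mul_assoc, ENNReal.inv_mul_cancel (by norm_num) (by norm_num), one_mul]
    · rcases eq_or_ne (Iconst8 u₀ u₁ u₂ v₁ v₂) ⊤ with hI | hI
      · rw [hI, ENNReal.mul_top (by norm_num)]
        exact le_top
      · refine ENNReal.le_of_forall_pos_le_add fun ε hε _ => ?_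
        refine sInf_le ?_
        exact hup (ε : ℝ≥0∞) (by exact_mod_cast hε)
end
end

section
/- Let 0 < β < ∞ and let u be a continuous weight function on (0,∞). Then the inequality sup_{r>0} u(r) ∫_{ℝⁿ∖B(0,r)} |y|^{−β} g(y) dy ≤ C · sup_{r>0} u(r) ( sup_{t>r} t^{−β} ∫_{B(0,t)} g(y) dy ) holds with some finite constant C for all nonnegative measurable g on ℝⁿ if and only if sup_{r>0} r^{β} · ( sup_{r<t<∞} t^{−β} ( sup_{0<s<t} u(s) ) ) · ∫_r^∞ t^{−β−1} · ( sup_{t<τ<∞} τ^{−β} ( sup_{0<s<τ} u(s) ) )^{−1} dt < ∞. -/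
open MeasureTheory ENNReal Set Metric

noncomputable section

/-- `A(r) = sup_{r<t<∞} t^{-β} · sup_{0<s<t} u(s)`. -/
def A9 (β : ℝ) (u : ℝ → ℝ) (r : ℝ) : ℝ≥0∞ :=
  ⨆ (t : ℝ) (_ : r < t),
    ENNReal.ofReal t ^ (-β) * ⨆ (s : ℝ) (_ : 0 < s) (_ : s < t), ENNReal.ofReal (u s)

section Stmt9Aux

variable {β : ℝ} {u : ℝ → ℝ} {n : ℕ}

open Filter Topology



def Bf (u : ℝ → ℝ) (t : ℝ) : ℝ≥0∞ := ⨆ (s : ℝ) (_ : 0 < s) (_ : s < t), ENNReal.ofReal (u s)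

def A9' (β : ℝ) (u : ℝ → ℝ) (r : ℝ) : ℝ≥0∞ :=
  ⨆ (t : ℝ) (_ : r < t), ENNReal.ofReal t ^ (-β) * Bf u t


lemma rpow_neg_anti (hβ : 0 < β) {a b : ℝ} (hab : a ≤ b) :
    ENNReal.ofReal b ^ (-β) ≤ ENNReal.ofReal a ^ (-β) := by
  rw [ENNReal.rpow_neg, ENNReal.rpow_neg]
  exact ENNReal.inv_le_inv.2 (ENNReal.rpow_le_rpow (ofReal_le_ofReal hab) hβ.le)

lemma rpow_neg_pos (hβ : 0 < β) {a : ℝ} (ha : 0 < a) : 0 < ENNReal.ofReal a ^ (-β) :=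
  ENNReal.rpow_pos (ofReal_pos.2 ha) ofReal_ne_top

lemma rpow_neg_ne_top (hβ : 0 < β) {a : ℝ} (ha : 0 < a) : ENNReal.ofReal a ^ (-β) ≠ ⊤ := by
  rw [ENNReal.rpow_neg]
  exact ENNReal.inv_ne_top.2 (ENNReal.rpow_pos (ofReal_pos.2 ha) ofReal_ne_top).ne'

lemma rpow_mul_rpow_neg (hβ : 0 < β) {a : ℝ} (ha : 0 < a) :
    ENNReal.ofReal a ^ β * ENNReal.ofReal a ^ (-β) = 1 := by
  rw [ENNReal.rpow_neg]
  exact ENNReal.mul_inv_cancel (ENNReal.rpow_pos (ofReal_pos.2 ha) ofReal_ne_top).ne'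
    (ENNReal.rpow_ne_top_of_nonneg hβ.le ofReal_ne_top)

/-- sup over `t > r` of `t^{-β}` equals `r^{-β}`. -/
lemma iSup_rpow_neg (hβ : 0 < β) {r : ℝ} (hr : 0 < r) :
    ⨆ (t : ℝ) (_ : r < t), ENNReal.ofReal t ^ (-β) = ENNReal.ofReal r ^ (-β) := by
  refine le_antisymm (iSup₂_le fun t ht => rpow_neg_anti hβ ht.le) ?_
  have hseq : Tendsto (fun k : ℕ => (r + 1 / (k + 1)) ^ (-β)) atTop (𝓝 (r ^ (-β))) := by
    have h1 : Tendsto (fun k : ℕ => r + 1 / (k + 1)) atTop (𝓝 r) := by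
      have := tendsto_one_div_add_atTop_nhds_zero_nat (𝕜 := ℝ)
      simpa using tendsto_const_nhds.add this
    exact ((Real.continuousAt_rpow_const r (-β) (Or.inl hr.ne')).tendsto).comp h1
  have hseq2 : Tendsto (fun k : ℕ => ENNReal.ofReal ((r + 1 / (k + 1)) ^ (-β))) atTop
      (𝓝 (ENNReal.ofReal (r ^ (-β)))) := (ENNReal.continuous_ofReal.tendsto _).comp hseq
  rw [ofReal_rpow_of_pos hr]
  refine le_of_tendsto hseq2 (Eventually.of_forall fun k => ?_)
  have hk : (0:ℝ) < 1 / (k + 1) := by positivity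
  have hrk : r < r + 1 / (k + 1) := by linarith
  rw [← ofReal_rpow_of_pos (by linarith)]
  exact le_iSup₂_of_le (r + 1 / (k + 1)) hrk le_rfl

lemma Bf_mono : Monotone (Bf u) := fun a b hab => by
  refine iSup_mono fun s => iSup_mono fun hs => ?_
  exact iSup_le fun h => le_iSup_of_le (h.trans_le hab) le_rfl

lemma le_Bf {s t : ℝ} (hs : 0 < s) (hst : s < t) : ENNReal.ofReal (u s) ≤ Bf u t :=
  le_iSup_of_le s <| le_iSup_of_le hs <| le_iSup_of_le hst le_rfl

lemma Bf_pos (hup : ∀ t ∈ Ioi (0:ℝ), 0 < u t) {t : ℝ} (ht : 0 < t) : 0 < Bf u t :=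
  lt_of_lt_of_le (ofReal_pos.2 (hup _ (half_pos ht))) (le_Bf (half_pos ht) (half_lt_self ht))



lemma A9'_antitone : Antitone (A9' β u) := fun a b hab => by
  refine iSup₂_le fun t ht => le_iSup₂_of_le t (hab.trans_lt ht) le_rfl

lemma le_A9' {r t : ℝ} (hrt : r < t) : ENNReal.ofReal t ^ (-β) * Bf u t ≤ A9' β u r :=
  le_iSup₂_of_le t hrt le_rfl

lemma A9'_ge (hβ : 0 < β) {r : ℝ} (hr : 0 < r) :
    ENNReal.ofReal r ^ (-β) * Bf u r ≤ A9' β u r := by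
  calc ENNReal.ofReal r ^ (-β) * Bf u r
      = (⨆ (t : ℝ) (_ : r < t), ENNReal.ofReal t ^ (-β)) * Bf u r := by
        rw [iSup_rpow_neg hβ hr]
    _ = ⨆ (t : ℝ) (_ : r < t), ENNReal.ofReal t ^ (-β) * Bf u r := by
        simp only [ENNReal.iSup_mul]
    _ ≤ A9' β u r := iSup₂_le fun t ht =>
        le_iSup₂_of_le t ht (mul_le_mul_right (Bf_mono ht.le) _)

lemma u_le_A9' (hβ : 0 < β) {r : ℝ} (hr : 0 < r) :
    ENNReal.ofReal (u r) ≤ ENNReal.ofReal r ^ β * A9' β u r := by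
  have h1 : ENNReal.ofReal r ^ (-β) * ENNReal.ofReal (u r) ≤ A9' β u r := by
    calc ENNReal.ofReal r ^ (-β) * ENNReal.ofReal (u r)
        = (⨆ (t : ℝ) (_ : r < t), ENNReal.ofReal t ^ (-β)) * ENNReal.ofReal (u r) := by
          rw [iSup_rpow_neg hβ hr]
      _ = ⨆ (t : ℝ) (_ : r < t), ENNReal.ofReal t ^ (-β) * ENNReal.ofReal (u r) := by
          simp only [ENNReal.iSup_mul]
      _ ≤ A9' β u r := iSup₂_le fun t ht =>
          le_iSup₂_of_le t ht (mul_le_mul_right (le_Bf hr ht) _)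
  calc ENNReal.ofReal (u r)
      = ENNReal.ofReal r ^ β * (ENNReal.ofReal r ^ (-β) * ENNReal.ofReal (u r)) := by
        rw [← mul_assoc, rpow_mul_rpow_neg hβ hr, one_mul]
    _ ≤ ENNReal.ofReal r ^ β * A9' β u r := mul_le_mul_right h1 _

lemma A9'_pos (hβ : 0 < β) (hup : ∀ t ∈ Ioi (0:ℝ), 0 < u t) {r : ℝ} (hr : 0 < r) :
    0 < A9' β u r :=
  lt_of_lt_of_le (ENNReal.mul_pos (rpow_neg_pos hβ hr).ne' (Bf_pos hup hr).ne') (A9'_ge hβ hr)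


lemma lint_Ioi_rpow (hβ : 0 < β) {a : ℝ} (ha : 0 < a) :
    ∫⁻ t in Ioi a, ENNReal.ofReal t ^ (-β - 1) = ENNReal.ofReal a ^ (-β) / ENNReal.ofReal β := by
  have h1 : ∫⁻ t in Ioi a, ENNReal.ofReal t ^ (-β - 1)
      = ∫⁻ t in Ioi a, ENNReal.ofReal (t ^ (-β - 1)) := by
    refine setLIntegral_congr_fun measurableSet_Ioi (fun t ht => ?_)
    exact ofReal_rpow_of_pos (ha.trans ht)
  rw [h1]
  have hint : IntegrableOn (fun t : ℝ => t ^ (-β - 1)) (Ioi a) := by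
    apply integrableOn_Ioi_rpow_of_lt (by linarith) ha
  have hnn : 0 ≤ᵐ[volume.restrict (Ioi a)] fun t : ℝ => t ^ (-β - 1) := by
    filter_upwards [ae_restrict_mem measurableSet_Ioi] with t ht
    exact Real.rpow_nonneg (le_of_lt (ha.trans ht)) _
  rw [← ofReal_integral_eq_lintegral_ofReal hint hnn]
  rw [integral_Ioi_rpow_of_lt (by linarith) ha]
  have : -a ^ (-β - 1 + 1) / (-β - 1 + 1) = a ^ (-β) / β := by
    rw [show -β - 1 + 1 = -β by ring]
    rw [div_eq_div_iff (by linarith) (by positivity)]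
    ring
  rw [this, ENNReal.ofReal_div_of_pos hβ, ofReal_rpow_of_pos ha]








lemma A9'_top_forall (hβ : 0 < β) (h : ∃ r, 0 < r ∧ A9' β u r = ⊤) :
    ∀ r, 0 < r → A9' β u r = ⊤ := by
  obtain ⟨r₀, hr₀, htop⟩ := h
  by_cases hB : ∃ x, 0 < x ∧ Bf u x = ⊤
  · obtain ⟨x, hx, hBx⟩ := hB
    intro r hr
    set t := max r x + 1 with ht
    have ht0 : 0 < t := by positivity
    have ht1 : r < t := (le_max_left r x).trans_lt (lt_add_one _)
    have ht2 : x ≤ t := (le_max_right r x).trans (le_of_lt (lt_add_one _))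
    have hBt : Bf u t = ⊤ := top_le_iff.1 (hBx ▸ Bf_mono ht2)
    have : ENNReal.ofReal t ^ (-β) * Bf u t = ⊤ := by
      rw [hBt, ENNReal.mul_top (rpow_neg_pos hβ ht0).ne']
    exact top_le_iff.1 (this ▸ le_A9' ht1)
  · push_neg at hB
    intro r hr
    rcases le_or_gt r r₀ with hle | hlt
    · exact top_le_iff.1 (htop ▸ A9'_antitone hle)
    · by_contra hne2
      have key : A9' β u r₀ ≤ (ENNReal.ofReal r₀ ^ (-β) * Bf u r) ⊔ A9' β u r := by
        refine iSup₂_le fun t ht => ?_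
        rcases le_or_gt t r with h1 | h1
        · exact le_sup_of_le_left (mul_le_mul' (rpow_neg_anti hβ ht.le) (Bf_mono h1))
        · exact le_sup_of_le_right (le_A9' h1)
      have hne : ENNReal.ofReal r₀ ^ (-β) * Bf u r ≠ ⊤ :=
        ENNReal.mul_ne_top (rpow_neg_ne_top hβ hr₀) (hB r hr)
      rw [htop] at key
      exact absurd (lt_of_le_of_lt key (max_lt hne.lt_top (lt_top_iff_ne_top.2 hne2)))
        (lt_irrefl _)

lemma case1_rhs (hA : ∀ r, 0 < r → A9' β u r = ⊤) :
    (⨆ (r : ℝ) (_ : 0 < r),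
      ENNReal.ofReal r ^ β * A9' β u r *
        ∫⁻ t in Ioi r, ENNReal.ofReal t ^ (-β - 1) * (A9' β u t)⁻¹) = 0 := by
  refine le_antisymm (iSup₂_le fun r hr => ?_) zero_le
  have hint : (∫⁻ t in Ioi r, ENNReal.ofReal t ^ (-β - 1) * (A9' β u t)⁻¹) = 0 := by
    have : ∀ t ∈ Ioi r, ENNReal.ofReal t ^ (-β - 1) * (A9' β u t)⁻¹ = 0 := fun t ht => by
      rw [hA t (hr.trans ht), ENNReal.inv_top, mul_zero]
    rw [setLIntegral_congr_fun measurableSet_Ioi this, lintegral_zero]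
  rw [hint, mul_zero]

lemma case1_ineq (n : ℕ) (hβ : 0 < β) (hA : ∀ r, 0 < r → A9' β u r = ⊤)
    (g : Rn n → ℝ≥0∞) (hg : Measurable g) :
    (⨆ (r : ℝ) (_ : 0 < r),
        ENNReal.ofReal (u r) *
          ∫⁻ y in (ball (0 : Rn n) r)ᶜ, ENNReal.ofReal ‖y‖ ^ (-β) * g y) ≤
      1 * ⨆ (r : ℝ) (_ : 0 < r),
        ENNReal.ofReal (u r) *
          ⨆ (t : ℝ) (_ : r < t),
            ENNReal.ofReal t ^ (-β) * ∫⁻ y in ball (0 : Rn n) t, g y := by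
  rw [one_mul]
  by_cases hzero : ∀ k : ℕ, ∫⁻ y in ball (0 : Rn n) k, g y = 0
  · have huniv : ∫⁻ y, g y = 0 := by
      have hU : (univ : Set (Rn n)) ⊆ ⋃ k : ℕ, ball (0 : Rn n) k := by
        intro y _
        obtain ⟨k, hk⟩ := exists_nat_gt ‖y‖
        exact mem_iUnion.2 ⟨k, by simpa [mem_ball, dist_zero_right] using hk⟩
      have h1 : ∫⁻ y, g y = ∫⁻ y in (univ : Set (Rn n)), g y := (setLIntegral_univ g).symm
      rw [h1]
      refine le_antisymm ?_ zero_le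
      calc ∫⁻ y in (univ : Set (Rn n)), g y
          ≤ ∫⁻ y in ⋃ k : ℕ, ball (0 : Rn n) k, g y := lintegral_mono_set hU
        _ ≤ ∑' k : ℕ, ∫⁻ y in ball (0 : Rn n) k, g y := lintegral_iUnion_le _ _
        _ = 0 := by simp [hzero]
    have hg0 : g =ᵐ[volume] 0 := (lintegral_eq_zero_iff hg).1 huniv
    refine iSup₂_le fun r hr => ?_
    have : (∫⁻ y in (ball (0 : Rn n) r)ᶜ, ENNReal.ofReal ‖y‖ ^ (-β) * g y) = 0 := by
      have h0 : (fun y => ENNReal.ofReal ‖y‖ ^ (-β) * g y) =ᵐ[volume] 0 := by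
        filter_upwards [hg0] with y hy
        simp [hy]
      calc (∫⁻ y in (ball (0 : Rn n) r)ᶜ, ENNReal.ofReal ‖y‖ ^ (-β) * g y)
          = ∫⁻ y in (ball (0 : Rn n) r)ᶜ, (0 : ℝ≥0∞) :=
            lintegral_congr_ae (ae_restrict_of_ae h0)
        _ = 0 := lintegral_zero
    rw [this, mul_zero]
    exact zero_le
  · push_neg at hzero
    obtain ⟨k, hk⟩ := hzero
    have hk0 : 0 < (k : ℝ) := by
      rcases Nat.eq_zero_or_pos k with h | h
      · exfalso; apply hk; rw [h]; simp
      · exact_mod_cast h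
    set m := ∫⁻ y in ball (0 : Rn n) (k : ℝ), g y with hm
    have hmpos : m ≠ 0 := hk
    set R := ⨆ (r : ℝ) (_ : 0 < r),
        ENNReal.ofReal (u r) *
          ⨆ (t : ℝ) (_ : r < t),
            ENNReal.ofReal t ^ (-β) * ∫⁻ y in ball (0 : Rn n) t, g y with hR
    have hRtop : R = ⊤ := by
      have step : A9' β u k * m ≤ R := by
        rw [A9', ENNReal.iSup_mul]
        refine iSup_le fun t => ?_
        rw [ENNReal.iSup_mul]
        refine iSup_le fun htk => ?_
        have hGt : m ≤ ∫⁻ y in ball (0 : Rn n) t, g y :=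
          lintegral_mono_set (ball_subset_ball htk.le)
        have hrewrite : ENNReal.ofReal t ^ (-β) * Bf u t * m
            = Bf u t * (ENNReal.ofReal t ^ (-β) * m) := by ring
        rw [hrewrite, Bf]
        simp only [ENNReal.iSup_mul]
        refine iSup_le fun s => iSup_le fun hs => iSup_le fun hst => ?_
        exact le_iSup₂_of_le s hs
          (mul_le_mul_right (le_iSup₂_of_le t hst (mul_le_mul_right hGt _)) _)
      rw [hA k hk0, ENNReal.top_mul hmpos] at step
      exact top_le_iff.1 step
    rw [hRtop]
    exact le_top







def Gfun {n : ℕ} (g : Rn n → ℝ≥0∞) (t : ℝ) : ℝ≥0∞ := ∫⁻ y in ball (0 : Rn n) t, g y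



lemma Gfun_mono (g : Rn n → ℝ≥0∞) : Monotone (Gfun g) := fun a b hab =>
  lintegral_mono_set (ball_subset_ball hab)

lemma measurable_A9' : Measurable (A9' β u) := A9'_antitone.measurable

/-- P1: the key Fubini bound. -/
lemma P1 (hβ : 0 < β) {r : ℝ} (hr : 0 < r) (g : Rn n → ℝ≥0∞) (hg : Measurable g) :
    (∫⁻ y in (ball (0 : Rn n) r)ᶜ, ENNReal.ofReal ‖y‖ ^ (-β) * g y) ≤
      ENNReal.ofReal β * ∫⁻ t in Ioi r, ENNReal.ofReal t ^ (-β - 1) * Gfun g t := by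
  set F : Rn n → ℝ → ℝ≥0∞ :=
    fun y t => (if ‖y‖ < t then ENNReal.ofReal t ^ (-β - 1) else 0) * g y with hF
  have hFmeas : Measurable (Function.uncurry F) := by
    apply Measurable.mul
    · apply Measurable.ite (measurableSet_lt (measurable_fst.norm) measurable_snd)
      · exact (ENNReal.measurable_ofReal.comp measurable_snd).pow_const _
      · exact measurable_const
    · exact hg.comp measurable_fst
  have hpt : ∀ y ∈ (ball (0 : Rn n) r)ᶜ,
      ENNReal.ofReal ‖y‖ ^ (-β) * g y = ENNReal.ofReal β * ∫⁻ t in Ioi r, F y t := by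
    intro y hy
    have hry : r ≤ ‖y‖ := by
      simp only [mem_compl_iff, mem_ball, dist_zero_right, not_lt] at hy
      exact hy
    have hy0 : 0 < ‖y‖ := hr.trans_le hry
    have h1 : ∀ t : ℝ, (if ‖y‖ < t then ENNReal.ofReal t ^ (-β - 1) else 0)
        = (Ioi ‖y‖).indicator (fun t => ENNReal.ofReal t ^ (-β - 1)) t := by
      intro t; rw [Set.indicator_apply]; simp [mem_Ioi]
    have h2 : (∫⁻ t in Ioi r, (if ‖y‖ < t then ENNReal.ofReal t ^ (-β - 1) else 0))
        = ∫⁻ t in Ioi ‖y‖, ENNReal.ofReal t ^ (-β - 1) := by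
      simp_rw [h1]
      rw [lintegral_indicator measurableSet_Ioi, Measure.restrict_restrict measurableSet_Ioi,
        inter_eq_left.2 (Ioi_subset_Ioi hry)]
    have h3 : (∫⁻ t in Ioi r, F y t)
        = (∫⁻ t in Ioi r, (if ‖y‖ < t then ENNReal.ofReal t ^ (-β - 1) else 0)) * g y := by
      rw [hF]
      exact lintegral_mul_const _ (by
        have : Measurable fun t : ℝ => (if ‖y‖ < t then ENNReal.ofReal t ^ (-β - 1) else 0) := by
          apply Measurable.ite (measurableSet_lt measurable_const measurable_id)
          · exact ENNReal.measurable_ofReal.pow_const _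
          · exact measurable_const
        exact this)
    rw [h3, h2, lint_Ioi_rpow hβ hy0, ← mul_assoc, mul_comm (ENNReal.ofReal β),
      ENNReal.div_mul_cancel (ofReal_pos.2 hβ).ne' ofReal_ne_top]
  calc (∫⁻ y in (ball (0 : Rn n) r)ᶜ, ENNReal.ofReal ‖y‖ ^ (-β) * g y)
      = ∫⁻ y in (ball (0 : Rn n) r)ᶜ, ENNReal.ofReal β * ∫⁻ t in Ioi r, F y t :=
        setLIntegral_congr_fun (measurableSet_ball.compl) hpt
    _ = ENNReal.ofReal β * ∫⁻ y in (ball (0 : Rn n) r)ᶜ, ∫⁻ t in Ioi r, F y t :=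
        lintegral_const_mul' _ _ ofReal_ne_top
    _ = ENNReal.ofReal β * ∫⁻ t in Ioi r, ∫⁻ y in (ball (0 : Rn n) r)ᶜ, F y t :=
        congrArg _ (lintegral_lintegral_swap hFmeas.aemeasurable)
    _ ≤ ENNReal.ofReal β * ∫⁻ t in Ioi r, ENNReal.ofReal t ^ (-β - 1) * Gfun g t := by
        refine mul_le_mul_right (setLIntegral_mono' measurableSet_Ioi fun t ht => ?_) _
        have ht0 : (0:ℝ) < t := hr.trans ht
        calc (∫⁻ y in (ball (0 : Rn n) r)ᶜ, F y t)
            ≤ ∫⁻ y in (ball (0 : Rn n) r)ᶜ,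
                (ball (0 : Rn n) t).indicator (fun y => ENNReal.ofReal t ^ (-β - 1) * g y) y := by
              refine lintegral_mono fun y => ?_
              simp only [hF]
              by_cases h : ‖y‖ < t
              · rw [if_pos h,
                  Set.indicator_of_mem (show y ∈ ball (0 : Rn n) t by
                    simpa [mem_ball, dist_zero_right] using h)]
              · rw [if_neg h, zero_mul]; exact zero_le
          _ ≤ ∫⁻ y, (ball (0 : Rn n) t).indicator (fun y => ENNReal.ofReal t ^ (-β - 1) * g y) y :=
              setLIntegral_le_lintegral _ _
          _ = ∫⁻ y in ball (0 : Rn n) t, ENNReal.ofReal t ^ (-β - 1) * g y :=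
              lintegral_indicator measurableSet_ball _
          _ = ENNReal.ofReal t ^ (-β - 1) * Gfun g t := lintegral_const_mul' _ _ (by
              rw [ofReal_rpow_of_pos ht0]; exact ofReal_ne_top)


/-- P2 -/
lemma P2 (g : Rn n → ℝ≥0∞) (t : ℝ) :
    Gfun g t * A9' β u t ≤
      ⨆ (r : ℝ) (_ : 0 < r), ENNReal.ofReal (u r) *
        ⨆ (t' : ℝ) (_ : r < t'), ENNReal.ofReal t' ^ (-β) * Gfun g t' := by
  rw [mul_comm, A9', ENNReal.iSup_mul]
  refine iSup_le fun τ => ?_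
  rw [ENNReal.iSup_mul]
  refine iSup_le fun hτ => ?_
  have hGt : Gfun g t ≤ Gfun g τ := Gfun_mono g hτ.le
  calc ENNReal.ofReal τ ^ (-β) * Bf u τ * Gfun g t
      ≤ ENNReal.ofReal τ ^ (-β) * Bf u τ * Gfun g τ := mul_le_mul_right hGt _
    _ = Bf u τ * (ENNReal.ofReal τ ^ (-β) * Gfun g τ) := by ring
    _ ≤ _ := by
        rw [Bf]
        simp only [ENNReal.iSup_mul]
        refine iSup_le fun s => iSup_le fun hs => iSup_le fun hsτ => ?_
        have h5 : ENNReal.ofReal τ ^ (-β) * Gfun g τ ≤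
            ⨆ (t' : ℝ) (_ : s < t'), ENNReal.ofReal t' ^ (-β) * Gfun g t' :=
          le_iSup₂_of_le τ hsτ le_rfl
        exact le_iSup₂_of_le s hs (mul_le_mul_right h5 _)

/-- backward direction -/
lemma backward (hβ : 0 < β) (hup : ∀ t ∈ Ioi (0:ℝ), 0 < u t)
    (hD : (⨆ (r : ℝ) (_ : 0 < r),
        ENNReal.ofReal r ^ β * A9' β u r *
          ∫⁻ t in Ioi r, ENNReal.ofReal t ^ (-β - 1) * (A9' β u t)⁻¹) ≠ ⊤)
    (hA : ∀ r, 0 < r → A9' β u r ≠ ⊤) :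
    ∃ C : ℝ≥0∞, C ≠ ⊤ ∧ ∀ g : Rn n → ℝ≥0∞, Measurable g →
        (⨆ (r : ℝ) (_ : 0 < r),
            ENNReal.ofReal (u r) *
              ∫⁻ y in (ball (0 : Rn n) r)ᶜ, ENNReal.ofReal ‖y‖ ^ (-β) * g y) ≤
          C * ⨆ (r : ℝ) (_ : 0 < r),
            ENNReal.ofReal (u r) *
              ⨆ (t : ℝ) (_ : r < t),
                ENNReal.ofReal t ^ (-β) * ∫⁻ y in ball (0 : Rn n) t, g y := by
  set D := ⨆ (r : ℝ) (_ : 0 < r),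
        ENNReal.ofReal r ^ β * A9' β u r *
          ∫⁻ t in Ioi r, ENNReal.ofReal t ^ (-β - 1) * (A9' β u t)⁻¹ with hDdef
  refine ⟨ENNReal.ofReal β * D + 1, by
    simp [ENNReal.add_ne_top, ENNReal.mul_ne_top ofReal_ne_top hD], fun g hg => ?_⟩
  set R := ⨆ (r : ℝ) (_ : 0 < r),
      ENNReal.ofReal (u r) *
        ⨆ (t : ℝ) (_ : r < t),
          ENNReal.ofReal t ^ (-β) * ∫⁻ y in ball (0 : Rn n) t, g y with hRdef
  refine iSup₂_le fun r hr => ?_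
  have hGR : ∀ t, r < t → Gfun g t ≤ R * (A9' β u t)⁻¹ := by
    intro t ht
    have htpos : 0 < t := hr.trans ht
    have h1 : Gfun g t * A9' β u t ≤ R := P2 g t
    rw [← ENNReal.le_div_iff_mul_le (Or.inl (A9'_pos hβ hup htpos).ne')
      (Or.inl (hA t htpos))] at h1
    rwa [ENNReal.div_eq_inv_mul, mul_comm] at h1
  calc ENNReal.ofReal (u r) *
        ∫⁻ y in (ball (0 : Rn n) r)ᶜ, ENNReal.ofReal ‖y‖ ^ (-β) * g y
      ≤ ENNReal.ofReal (u r) *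
        (ENNReal.ofReal β * ∫⁻ t in Ioi r, ENNReal.ofReal t ^ (-β - 1) * Gfun g t) :=
        mul_le_mul_right (P1 hβ hr g hg) _
    _ ≤ ENNReal.ofReal (u r) *
        (ENNReal.ofReal β * ∫⁻ t in Ioi r,
          ENNReal.ofReal t ^ (-β - 1) * (R * (A9' β u t)⁻¹)) := by
        refine mul_le_mul_right (mul_le_mul_right
          (setLIntegral_mono' measurableSet_Ioi fun t ht => ?_) _) _
        exact mul_le_mul_right (hGR t ht) _
    _ = ENNReal.ofReal (u r) *
        (ENNReal.ofReal β * (R * ∫⁻ t in Ioi r,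
          ENNReal.ofReal t ^ (-β - 1) * (A9' β u t)⁻¹)) := by
        congr 1
        congr 1
        rw [← lintegral_const_mul _ (by
          exact (ENNReal.measurable_ofReal.comp measurable_id |>.pow_const _).mul
            measurable_A9'.inv)]
        congr 1
        ext t
        ring
    _ ≤ ENNReal.ofReal r ^ β * A9' β u r *
        (ENNReal.ofReal β * (R * ∫⁻ t in Ioi r,
          ENNReal.ofReal t ^ (-β - 1) * (A9' β u t)⁻¹)) :=
        mul_le_mul_left (u_le_A9' hβ hr) _
    _ = ENNReal.ofReal β * (ENNReal.ofReal r ^ β * A9' β u r *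
          ∫⁻ t in Ioi r, ENNReal.ofReal t ^ (-β - 1) * (A9' β u t)⁻¹) * R := by ring
    _ ≤ ENNReal.ofReal β * D * R := by
        refine mul_le_mul_left (mul_le_mul_right ?_ _) _
        exact le_iSup₂_of_le r hr le_rfl
    _ ≤ (ENNReal.ofReal β * D + 1) * R := mul_le_mul_left le_self_add _





lemma annulus_vol_pos (hn : 1 ≤ n) {a b : ℝ} (ha : 0 < a) (hab : a < b) :
    0 < volume (ball (0 : Rn n) b \ ball (0 : Rn n) a) := by
  have i : Fin n := ⟨0, hn⟩
  set z : Rn n := EuclideanSpace.single i ((a + b) / 2) with hz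
  have hznorm : ‖z‖ = (a + b) / 2 := by
    rw [hz, EuclideanSpace.norm_single, Real.norm_eq_abs, abs_of_pos (by linarith)]
  have hsub : ball z ((b - a) / 2) ⊆ ball (0 : Rn n) b \ ball (0 : Rn n) a := by
    intro y hy
    rw [mem_ball, dist_eq_norm] at hy
    constructor
    · rw [mem_ball, dist_zero_right]
      calc ‖y‖ ≤ ‖z‖ + ‖y - z‖ := by
            have := norm_add_le z (y - z); simpa using this
        _ < (a + b) / 2 + (b - a) / 2 := by rw [hznorm]; linarith [hy]
        _ = b := by ring
    · rw [mem_ball, dist_zero_right, not_lt]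
      calc a = (a + b) / 2 - (b - a) / 2 := by ring
        _ ≤ ‖z‖ - ‖y - z‖ := by rw [hznorm]; linarith [hy]
        _ ≤ ‖y‖ := by
            have := norm_sub_norm_le z y
            have h2 : ‖z - y‖ = ‖y - z‖ := norm_sub_rev z y
            linarith [this, h2]
  exact lt_of_lt_of_le (measure_ball_pos volume z (by linarith)) (measure_mono hsub)

lemma annulus_vol_lt_top {a b : ℝ} :
    volume (ball (0 : Rn n) b \ ball (0 : Rn n) a) < ⊤ :=
  lt_of_le_of_lt (measure_mono diff_subset) measure_ball_lt_top





lemma ennreal_mul_inv_le_one (a : ℝ≥0∞) : a * a⁻¹ ≤ 1 := by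
  rcases eq_or_ne a 0 with h | h
  · simp [h]
  rcases eq_or_ne a ⊤ with h' | h'
  · simp [h']
  · rw [ENNReal.mul_inv_cancel h h']

/-- grid points -/
def qf (s : ℝ) (m k : ℕ) : ℝ := s + k / 2 ^ m

/-- cumulative heights -/
def fNf (β : ℝ) (u : ℝ → ℝ) (s : ℝ) (m : ℕ) (i : ℕ) : ℝ≥0∞ :=
  if i = 0 then 0 else (A9' β u (qf s m (i - 1)))⁻¹

/-- increments -/
def dfun (β : ℝ) (u : ℝ → ℝ) (s : ℝ) (m k : ℕ) : ℝ≥0∞ :=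
  fNf β u s m (k + 1) - fNf β u s m k

/-- step approximations -/
def σfun (β : ℝ) (u : ℝ → ℝ) (s : ℝ) (m : ℕ) (t : ℝ) : ℝ≥0∞ :=
  ∑ k ∈ Finset.range (m * 2 ^ m), (Ioi (qf s m (k + 1))).indicator
    (fun _ => dfun β u s m k) t

lemma qf_lt {s : ℝ} {m : ℕ} {k l : ℕ} (h : k < l) : qf s m k < qf s m l := by
  unfold qf
  have h2 : (0:ℝ) < 2 ^ m := by positivity
  gcongr


lemma qf_le {s : ℝ} {m : ℕ} {k l : ℕ} (h : k ≤ l) : qf s m k ≤ qf s m l := by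
  rcases h.lt_or_eq with h | rfl
  · exact (qf_lt h).le
  · exact le_rfl

lemma qf_zero (s : ℝ) (m : ℕ) : qf s m 0 = s := by simp [qf]

lemma le_qf {s : ℝ} (m k : ℕ) : s ≤ qf s m k :=
  calc s = qf s m 0 := (qf_zero s m).symm
    _ ≤ qf s m k := qf_le (Nat.zero_le k)

lemma qf_pos {s : ℝ} (hs : 0 < s) (m k : ℕ) : 0 < qf s m k := hs.trans_le (le_qf m k)

lemma fNf_mono {s : ℝ} : Monotone (fNf β u s m) := by
  intro i j hij
  unfold fNf
  rcases Nat.eq_zero_or_pos i with rfl | hi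
  · simp
  · rw [if_neg hi.ne', if_neg (lt_of_lt_of_le hi hij).ne']
    exact ENNReal.inv_le_inv.2 (A9'_antitone (qf_le (by omega)))

lemma fNf_ne_top (hβ : 0 < β) (hup : ∀ t ∈ Ioi (0:ℝ), 0 < u t) {s : ℝ} (hs : 0 < s)
    (m i : ℕ) : fNf β u s m i ≠ ⊤ := by
  unfold fNf
  rcases Nat.eq_zero_or_pos i with rfl | hi
  · simp
  · rw [if_neg hi.ne']
    exact ENNReal.inv_ne_top.2 (A9'_pos hβ hup (qf_pos hs m _)).ne'

lemma dfun_ne_top (hβ : 0 < β) (hup : ∀ t ∈ Ioi (0:ℝ), 0 < u t) {s : ℝ} (hs : 0 < s)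
    (m k : ℕ) : dfun β u s m k ≠ ⊤ :=
  ne_top_of_le_ne_top (fNf_ne_top hβ hup hs m (k+1)) tsub_le_self

lemma sum_dfun {s : ℝ} (m j : ℕ) :
    ∑ k ∈ Finset.range j, dfun β u s m k = fNf β u s m j := by
  induction j with
  | zero => simp [fNf]
  | succ j ih =>
    rw [Finset.sum_range_succ, ih, dfun, add_comm,
      tsub_add_cancel_of_le (fNf_mono (Nat.le_succ j))]

/-- annuli -/
def annk (n : ℕ) (s : ℝ) (m k : ℕ) : Set (Rn n) :=
  ball (0 : Rn n) (qf s m (k + 1)) \ ball (0 : Rn n) (qf s m k)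

lemma annk_meas (s : ℝ) (m k : ℕ) : MeasurableSet (annk n s m k) :=
  measurableSet_ball.diff measurableSet_ball

lemma annk_vol_pos (hn : 1 ≤ n) {s : ℝ} (hs : 0 < s) (m k : ℕ) :
    0 < volume (annk n s m k) :=
  annulus_vol_pos hn (qf_pos hs m k) (qf_lt (lt_add_one k))

lemma annk_vol_ne_top {s : ℝ} (m k : ℕ) : volume (annk n s m k) ≠ ⊤ :=
  annulus_vol_lt_top.ne

lemma mem_annk {y : Rn n} {s : ℝ} {m k : ℕ} :
    y ∈ annk n s m k ↔ qf s m k ≤ ‖y‖ ∧ ‖y‖ < qf s m (k + 1) := by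
  simp only [annk, mem_diff, mem_ball, dist_zero_right, not_lt]
  tauto

/-- the bump test function -/
def gbump (β : ℝ) (u : ℝ → ℝ) (n : ℕ) (s : ℝ) (m : ℕ) (y : Rn n) : ℝ≥0∞ :=
  ∑ k ∈ Finset.range (m * 2 ^ m),
    dfun β u s m k * (volume (annk n s m k))⁻¹ * (annk n s m k).indicator 1 y

lemma gbump_meas (s : ℝ) (m : ℕ) : Measurable (gbump β u n s m) := by
  apply Finset.measurable_sum
  intro k _
  exact measurable_const.mul (measurable_one.indicator (annk_meas s m k))

lemma coef_ne_top (hn : 1 ≤ n) (hβ : 0 < β) (hup : ∀ t ∈ Ioi (0:ℝ), 0 < u t)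
    {s : ℝ} (hs : 0 < s) (m k : ℕ) :
    dfun β u s m k * (volume (annk n s m k))⁻¹ ≠ ⊤ :=
  ENNReal.mul_ne_top (dfun_ne_top hβ hup hs m k)
    (ENNReal.inv_ne_top.2 (annk_vol_pos hn hs m k).ne')

lemma sum_range_tsub' {f : ℕ → ℝ≥0∞} (hf : Monotone f) (h0 : f 0 = 0) (j : ℕ) :
    ∑ k ∈ Finset.range j, (f (k + 1) - f k) = f j := by
  induction j with
  | zero => simp [h0]
  | succ j ih =>
    rw [Finset.sum_range_succ, ih, add_comm, tsub_add_cancel_of_le (hf (Nat.le_succ j))]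

/-- (c): the ball integrals of `gbump` are dominated by `H`. -/
lemma bump_G (hn : 1 ≤ n) (hβ : 0 < β) (hup : ∀ t ∈ Ioi (0:ℝ), 0 < u t)
    {s : ℝ} (hs : 0 < s) (m : ℕ) (t : ℝ) :
    (∫⁻ y in ball (0 : Rn n) t, gbump β u n s m y) ≤ (A9' β u t)⁻¹ := by
  set f' : ℕ → ℝ≥0∞ := fun i => min (fNf β u s m i) ((A9' β u t)⁻¹) with hf'
  have hf'mono : Monotone f' := fun a b hab => min_le_min (fNf_mono hab) le_rfl
  have h1 : (∫⁻ y in ball (0 : Rn n) t, gbump β u n s m y)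
      = ∑ k ∈ Finset.range (m * 2 ^ m),
          dfun β u s m k * (volume (annk n s m k))⁻¹ *
            volume (annk n s m k ∩ ball (0 : Rn n) t) := by
    simp only [gbump]
    rw [lintegral_finset_sum _ (fun k _ =>
      (measurable_one.indicator (annk_meas s m k)).const_mul _)]
    refine Finset.sum_congr rfl fun k _ => ?_
    rw [lintegral_const_mul' _ _ (coef_ne_top hn hβ hup hs m k),
      lintegral_indicator_one (annk_meas s m k),
      Measure.restrict_apply (annk_meas s m k)]
  rw [h1]
  have h2 : ∀ k ∈ Finset.range (m * 2 ^ m),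
      dfun β u s m k * (volume (annk n s m k))⁻¹ *
        volume (annk n s m k ∩ ball (0 : Rn n) t) ≤ f' (k + 1) - f' k := by
    intro k _
    by_cases hkt : qf s m k < t
    · have hsub : volume (annk n s m k ∩ ball (0 : Rn n) t) ≤ volume (annk n s m k) :=
        measure_mono inter_subset_left
      have hfk1 : fNf β u s m (k + 1) ≤ (A9' β u t)⁻¹ := by
        rw [fNf, if_neg (Nat.succ_ne_zero k)]
        simp only [Nat.add_sub_cancel]
        exact ENNReal.inv_le_inv.2 (A9'_antitone hkt.le)
      calc dfun β u s m k * (volume (annk n s m k))⁻¹ *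
            volume (annk n s m k ∩ ball (0 : Rn n) t)
          ≤ dfun β u s m k * (volume (annk n s m k))⁻¹ * volume (annk n s m k) :=
            mul_le_mul_right hsub _
        _ = dfun β u s m k := by
            rw [mul_assoc, ENNReal.inv_mul_cancel (annk_vol_pos hn hs m k).ne'
              (annk_vol_ne_top m k), mul_one]
        _ = f' (k + 1) - f' k := by
            rw [hf', dfun]
            have e1 : min (fNf β u s m (k + 1)) (A9' β u t)⁻¹ = fNf β u s m (k + 1) :=
              min_eq_left hfk1
            have e2 : min (fNf β u s m k) (A9' β u t)⁻¹ = fNf β u s m k :=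
              min_eq_left ((fNf_mono (Nat.le_succ k)).trans hfk1)
            simp only [e1, e2]
    · have hempty : annk n s m k ∩ ball (0 : Rn n) t = ∅ := by
        refine eq_empty_iff_forall_notMem.2 fun y hy => ?_
        have h3 := (mem_annk.1 hy.1).1
        have h4 : ‖y‖ < t := by
          have := hy.2; rwa [mem_ball, dist_zero_right] at this
        push_neg at hkt
        linarith
      rw [hempty]
      simp
  calc ∑ k ∈ Finset.range (m * 2 ^ m),
        dfun β u s m k * (volume (annk n s m k))⁻¹ *
          volume (annk n s m k ∩ ball (0 : Rn n) t)
      ≤ ∑ k ∈ Finset.range (m * 2 ^ m), (f' (k + 1) - f' k) := Finset.sum_le_sum h2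
    _ = f' (m * 2 ^ m) := sum_range_tsub' hf'mono (by simp [hf', fNf]) _
    _ ≤ (A9' β u t)⁻¹ := min_le_right _ _

/-- (d): lower bound for the weighted integral of `gbump` outside `ball s`. -/
lemma bump_low (hn : 1 ≤ n) (hβ : 0 < β) (hup : ∀ t ∈ Ioi (0:ℝ), 0 < u t)
    {s : ℝ} (hs : 0 < s) (m : ℕ) :
    ∑ k ∈ Finset.range (m * 2 ^ m),
        dfun β u s m k * ENNReal.ofReal (qf s m (k + 1)) ^ (-β) ≤
      ∫⁻ y in (ball (0 : Rn n) s)ᶜ, ENNReal.ofReal ‖y‖ ^ (-β) * gbump β u n s m y := by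
  have hpt : ∀ y : Rn n, ENNReal.ofReal ‖y‖ ^ (-β) * gbump β u n s m y
      = ∑ k ∈ Finset.range (m * 2 ^ m),
          dfun β u s m k * (volume (annk n s m k))⁻¹ *
            (annk n s m k).indicator (fun y => ENNReal.ofReal ‖y‖ ^ (-β)) y := by
    intro y
    rw [gbump, Finset.mul_sum]
    refine Finset.sum_congr rfl fun k _ => ?_
    by_cases hy : y ∈ annk n s m k
    · rw [Set.indicator_of_mem hy, Set.indicator_of_mem hy, Pi.one_apply]
      ring
    · rw [Set.indicator_of_notMem hy, Set.indicator_of_notMem hy]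
      simp
  have hmeas : ∀ k, Measurable fun y : Rn n =>
      dfun β u s m k * (volume (annk n s m k))⁻¹ *
        (annk n s m k).indicator (fun y => ENNReal.ofReal ‖y‖ ^ (-β)) y := by
    intro k
    exact measurable_const.mul ((((ENNReal.measurable_ofReal).comp measurable_norm).pow_const
      _).indicator (annk_meas s m k))
  calc ∑ k ∈ Finset.range (m * 2 ^ m),
        dfun β u s m k * ENNReal.ofReal (qf s m (k + 1)) ^ (-β)
      ≤ ∑ k ∈ Finset.range (m * 2 ^ m),
          dfun β u s m k * (volume (annk n s m k))⁻¹ *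
            ∫⁻ y in (ball (0 : Rn n) s)ᶜ,
              (annk n s m k).indicator (fun y => ENNReal.ofReal ‖y‖ ^ (-β)) y := by
        refine Finset.sum_le_sum fun k _ => ?_
        have hsub : annk n s m k ⊆ (ball (0 : Rn n) s)ᶜ := by
          intro y hy
          have h1 := (mem_annk.1 hy).1
          simp only [mem_compl_iff, mem_ball, dist_zero_right, not_lt]
          exact (le_qf m k).trans h1
        have e1 : (∫⁻ y in (ball (0 : Rn n) s)ᶜ,
            (annk n s m k).indicator (fun y => ENNReal.ofReal ‖y‖ ^ (-β)) y)
            = ∫⁻ y in annk n s m k, ENNReal.ofReal ‖y‖ ^ (-β) := by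
          rw [lintegral_indicator (annk_meas s m k),
            Measure.restrict_restrict (annk_meas s m k), inter_eq_left.2 hsub]
        have e2 : ENNReal.ofReal (qf s m (k + 1)) ^ (-β) * volume (annk n s m k)
            ≤ ∫⁻ y in annk n s m k, ENNReal.ofReal ‖y‖ ^ (-β) := by
          rw [← setLIntegral_const (annk n s m k) (ENNReal.ofReal (qf s m (k + 1)) ^ (-β))]
          refine setLIntegral_mono' (annk_meas s m k) fun y hy => ?_
          exact rpow_neg_anti hβ (mem_annk.1 hy).2.le
        rw [e1]
        calc dfun β u s m k * ENNReal.ofReal (qf s m (k + 1)) ^ (-β)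
            = dfun β u s m k * (volume (annk n s m k))⁻¹ *
              (ENNReal.ofReal (qf s m (k + 1)) ^ (-β) * volume (annk n s m k)) := by
              have : (volume (annk n s m k))⁻¹ * volume (annk n s m k) = 1 :=
                ENNReal.inv_mul_cancel (annk_vol_pos hn hs m k).ne' (annk_vol_ne_top m k)
              calc dfun β u s m k * ENNReal.ofReal (qf s m (k + 1)) ^ (-β)
                  = dfun β u s m k * ENNReal.ofReal (qf s m (k + 1)) ^ (-β) *
                    ((volume (annk n s m k))⁻¹ * volume (annk n s m k)) := by
                    rw [this, mul_one]
                _ = _ := by ring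
          _ ≤ _ := mul_le_mul_right e2 _
    _ = ∫⁻ y in (ball (0 : Rn n) s)ᶜ, ENNReal.ofReal ‖y‖ ^ (-β) * gbump β u n s m y := by
        rw [show (fun y : Rn n => ENNReal.ofReal ‖y‖ ^ (-β) * gbump β u n s m y) = _ from
          funext hpt]
        rw [lintegral_finset_sum _ (fun k _ => hmeas k)]
        refine Finset.sum_congr rfl fun k _ => ?_
        rw [lintegral_const_mul' _ _ (coef_ne_top hn hβ hup hs m k)]

/-- (e): the step-function integral identity. -/
lemma bump_sigma (hβ : 0 < β) (hup : ∀ t ∈ Ioi (0:ℝ), 0 < u t) {s : ℝ} (hs : 0 < s)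
    (m : ℕ) :
    ENNReal.ofReal β * ∫⁻ t in Ioi s, ENNReal.ofReal t ^ (-β - 1) * σfun β u s m t
      = ∑ k ∈ Finset.range (m * 2 ^ m),
          dfun β u s m k * ENNReal.ofReal (qf s m (k + 1)) ^ (-β) := by
  have hpt : ∀ t : ℝ, ENNReal.ofReal t ^ (-β - 1) * σfun β u s m t
      = ∑ k ∈ Finset.range (m * 2 ^ m),
          (Ioi (qf s m (k + 1))).indicator
            (fun t => ENNReal.ofReal t ^ (-β - 1) * dfun β u s m k) t := by
    intro t
    rw [σfun, Finset.mul_sum]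
    refine Finset.sum_congr rfl fun k _ => ?_
    by_cases ht : t ∈ Ioi (qf s m (k + 1))
    · rw [Set.indicator_of_mem ht, Set.indicator_of_mem ht]
    · rw [Set.indicator_of_notMem ht, Set.indicator_of_notMem ht, mul_zero]
  have hmeas : ∀ k, Measurable fun t : ℝ =>
      (Ioi (qf s m (k + 1))).indicator
        (fun t => ENNReal.ofReal t ^ (-β - 1) * dfun β u s m k) t := fun k =>
    ((ENNReal.measurable_ofReal.comp measurable_id |>.pow_const _).mul_const _).indicator
      measurableSet_Ioi
  have e0 : (∫⁻ t in Ioi s, ENNReal.ofReal t ^ (-β - 1) * σfun β u s m t)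
      = ∑ k ∈ Finset.range (m * 2 ^ m),
          ∫⁻ t in Ioi (qf s m (k + 1)), ENNReal.ofReal t ^ (-β - 1) * dfun β u s m k := by
    rw [show (fun t : ℝ => ENNReal.ofReal t ^ (-β - 1) * σfun β u s m t) = _ from
      funext hpt]
    rw [lintegral_finset_sum _ (fun k _ => hmeas k)]
    refine Finset.sum_congr rfl fun k _ => ?_
    rw [lintegral_indicator measurableSet_Ioi,
      Measure.restrict_restrict measurableSet_Ioi, inter_eq_left.2 (Ioi_subset_Ioi ?_)]
    calc s = qf s m 0 := (qf_zero s m).symm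
      _ ≤ qf s m (k + 1) := qf_le (Nat.zero_le _)
  rw [e0, Finset.mul_sum]
  refine Finset.sum_congr rfl fun k _ => ?_
  rw [lintegral_mul_const _ (ENNReal.measurable_ofReal.pow_const _),
    lint_Ioi_rpow hβ (qf_pos hs m (k + 1))]
  rw [← mul_assoc, mul_comm (ENNReal.ofReal β),
    ENNReal.div_mul_cancel (ofReal_pos.2 hβ).ne' ofReal_ne_top, mul_comm]

/-- the `R`-side bound for `gbump`. -/
lemma bump_R (hn : 1 ≤ n) (hβ : 0 < β) (hup : ∀ t ∈ Ioi (0:ℝ), 0 < u t)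
    {s : ℝ} (hs : 0 < s) (m : ℕ) :
    (⨆ (r : ℝ) (_ : 0 < r),
        ENNReal.ofReal (u r) *
          ⨆ (t : ℝ) (_ : r < t),
            ENNReal.ofReal t ^ (-β) * ∫⁻ y in ball (0 : Rn n) t, gbump β u n s m y) ≤ 1 := by
  refine iSup₂_le fun r hr => ?_
  rw [ENNReal.mul_iSup]
  refine iSup_le fun t => ?_
  rw [ENNReal.mul_iSup]
  refine iSup_le fun htr => ?_
  have ht0 : 0 < t := hr.trans htr
  calc ENNReal.ofReal (u r) *
        (ENNReal.ofReal t ^ (-β) * ∫⁻ y in ball (0 : Rn n) t, gbump β u n s m y)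
      ≤ Bf u t * (ENNReal.ofReal t ^ (-β) * (A9' β u t)⁻¹) :=
        mul_le_mul' (le_Bf hr htr) (mul_le_mul_right (bump_G hn hβ hup hs m t) _)
    _ = (ENNReal.ofReal t ^ (-β) * Bf u t) * (A9' β u t)⁻¹ := by ring
    _ ≤ A9' β u t * (A9' β u t)⁻¹ := mul_le_mul_left (A9'_ge hβ ht0) _
    _ ≤ 1 := ennreal_mul_inv_le_one _

/-- the per-`m` bound. -/
lemma bump_main (hn : 1 ≤ n) (hβ : 0 < β) (hup : ∀ t ∈ Ioi (0:ℝ), 0 < u t)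
    {C : ℝ≥0∞}
    (hineq : ∀ g : Rn n → ℝ≥0∞, Measurable g →
        (⨆ (r : ℝ) (_ : 0 < r),
            ENNReal.ofReal (u r) *
              ∫⁻ y in (ball (0 : Rn n) r)ᶜ, ENNReal.ofReal ‖y‖ ^ (-β) * g y) ≤
          C * ⨆ (r : ℝ) (_ : 0 < r),
            ENNReal.ofReal (u r) *
              ⨆ (t : ℝ) (_ : r < t),
                ENNReal.ofReal t ^ (-β) * ∫⁻ y in ball (0 : Rn n) t, g y)
    {s : ℝ} (hs : 0 < s) (m : ℕ) :
    ENNReal.ofReal (u s) *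
      (ENNReal.ofReal β * ∫⁻ t in Ioi s, ENNReal.ofReal t ^ (-β - 1) * σfun β u s m t) ≤ C := by
  calc ENNReal.ofReal (u s) *
        (ENNReal.ofReal β * ∫⁻ t in Ioi s, ENNReal.ofReal t ^ (-β - 1) * σfun β u s m t)
      = ENNReal.ofReal (u s) * ∑ k ∈ Finset.range (m * 2 ^ m),
          dfun β u s m k * ENNReal.ofReal (qf s m (k + 1)) ^ (-β) := by
        rw [bump_sigma hβ hup hs m]
    _ ≤ ENNReal.ofReal (u s) *
          ∫⁻ y in (ball (0 : Rn n) s)ᶜ, ENNReal.ofReal ‖y‖ ^ (-β) * gbump β u n s m y :=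
        mul_le_mul_right (bump_low hn hβ hup hs m) _
    _ ≤ ⨆ (r : ℝ) (_ : 0 < r),
          ENNReal.ofReal (u r) *
            ∫⁻ y in (ball (0 : Rn n) r)ᶜ, ENNReal.ofReal ‖y‖ ^ (-β) * gbump β u n s m y :=
        le_iSup₂_of_le s hs le_rfl
    _ ≤ C * ⨆ (r : ℝ) (_ : 0 < r),
          ENNReal.ofReal (u r) *
            ⨆ (t : ℝ) (_ : r < t),
              ENNReal.ofReal t ^ (-β) * ∫⁻ y in ball (0 : Rn n) t, gbump β u n s m y :=
        hineq _ (gbump_meas s m)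
    _ ≤ C * 1 := mul_le_mul_right (bump_R hn hβ hup hs m) _
    _ = C := mul_one C

def Hmf (β : ℝ) (u : ℝ → ℝ) (t : ℝ) : ℝ≥0∞ := ⨆ (t' : ℝ) (_ : t' < t), (A9' β u t')⁻¹

lemma σfun_meas {s : ℝ} (m : ℕ) : Measurable (σfun β u s m) := by
  apply Finset.measurable_sum
  intro k _
  exact measurable_const.indicator measurableSet_Ioi

lemma sigma_lower {s : ℝ} (hs : 0 < s) {t t' : ℝ} (hst : s < t) (ht't : t' < t) :
    ∀ᶠ (m : ℕ) in atTop, (A9' β u t')⁻¹ ≤ σfun β u s m t := by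
  set maxv := max (t' - s) 0 with hmaxv
  have hmaxv0 : 0 ≤ maxv := le_max_right _ _
  have hmax_lt : max t' s < t := max_lt ht't hst
  have hsm : s + maxv = max t' s := by
    rcases le_total t' s with h | h
    · rw [max_eq_right h, hmaxv, max_eq_right (by linarith)]; ring
    · rw [max_eq_left h, hmaxv, max_eq_left (by linarith)]; ring
  have e1 : ∀ᶠ (m : ℕ) in atTop, 2 / (2:ℝ) ^ m < t - max t' s := by
    have h0 : Tendsto (fun m : ℕ => 2 / (2:ℝ) ^ m) atTop (𝓝 0) := by
      have h1 : Tendsto (fun m : ℕ => ((1:ℝ)/2) ^ m) atTop (𝓝 0) :=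
        tendsto_pow_atTop_nhds_zero_of_lt_one (by norm_num) (by norm_num)
      have : (fun m : ℕ => 2 / (2:ℝ) ^ m) = fun m : ℕ => 2 * ((1:ℝ)/2) ^ m := by
        funext m; rw [div_pow, one_pow]; ring
      rw [this]
      simpa using h1.const_mul 2
    exact h0.eventually_lt_const (by linarith)
  have e2 : ∀ᶠ (m : ℕ) in atTop, maxv + 2 ≤ (m : ℝ) :=
    tendsto_natCast_atTop_atTop.eventually_ge_atTop _
  filter_upwards [e1, e2] with m h1 h2
  set j := ⌈maxv * 2 ^ m⌉₊ with hj
  have h2m : (1:ℝ) ≤ (2:ℝ) ^ m := one_le_pow₀ (by norm_num)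
  have h2mpos : (0:ℝ) < 2 ^ m := by positivity
  have hjlow : maxv * 2 ^ m ≤ (j : ℝ) := Nat.le_ceil _
  have hjup : (j : ℝ) < maxv * 2 ^ m + 1 := Nat.ceil_lt_add_one (by positivity)
  -- (i) q j ≥ t'
  have hi : t' ≤ qf s m j := by
    have : maxv ≤ (j : ℝ) / 2 ^ m := (le_div_iff₀ h2mpos).2 hjlow
    have ht'max : t' ≤ s + maxv := by rw [hsm]; exact le_max_left _ _
    unfold qf; linarith
  -- (ii) q (j+1) < t
  have hii : qf s m (j + 1) < t := by
    unfold qf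
    have : ((j:ℝ) + 1 + 1) ≤ maxv * 2 ^ m + 3 := by linarith
    have hq : (↑(j+1) : ℝ) / 2 ^ m < maxv + 2 / 2 ^ m := by
      rw [div_lt_iff₀ h2mpos]
      push_cast
      calc (j:ℝ) + 1 < maxv * 2 ^ m + 2 := by linarith
        _ = (maxv + 2 / 2 ^ m) * 2 ^ m := by field_simp
    calc s + (↑(j+1) : ℝ) / 2 ^ m < s + maxv + 2 / 2 ^ m := by linarith
      _ = max t' s + 2 / 2 ^ m := by rw [hsm]
      _ < t := by linarith
  -- (iii) j + 1 ≤ m * 2^m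
  have hiii : j + 1 ≤ m * 2 ^ m := by
    have hr : ((j:ℝ) + 1) < (m : ℝ) * 2 ^ m := by
      calc (j:ℝ) + 1 < maxv * 2 ^ m + 2 := by linarith
        _ ≤ maxv * 2 ^ m + 2 * 2 ^ m := by linarith
        _ = (maxv + 2) * 2 ^ m := by ring
        _ ≤ (m : ℝ) * 2 ^ m := by
            have := h2
            gcongr
    have : ((j + 1 : ℕ) : ℝ) ≤ ((m * 2 ^ m : ℕ) : ℝ) := by push_cast; linarith
    exact_mod_cast this
  -- conclude
  have hsum : σfun β u s m t ≥ ∑ k ∈ Finset.range (j + 1),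
      (Ioi (qf s m (k + 1))).indicator (fun _ => dfun β u s m k) t := by
    rw [σfun]
    exact Finset.sum_le_sum_of_subset (Finset.range_subset_range.2 hiii)
  have hterm : ∀ k ∈ Finset.range (j + 1),
      (Ioi (qf s m (k + 1))).indicator (fun _ => dfun β u s m k) t = dfun β u s m k := by
    intro k hk
    have hk' : k + 1 ≤ j + 1 := Finset.mem_range.1 hk
    have : qf s m (k + 1) < t := lt_of_le_of_lt (qf_le hk') hii
    rw [Set.indicator_of_mem (mem_Ioi.2 this)]
  calc (A9' β u t')⁻¹ ≤ (A9' β u (qf s m j))⁻¹ :=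
        ENNReal.inv_le_inv.2 (A9'_antitone hi)
    _ = fNf β u s m (j + 1) := by rw [fNf, if_neg (Nat.succ_ne_zero j)]; simp
    _ = ∑ k ∈ Finset.range (j + 1), dfun β u s m k := (sum_dfun m (j+1)).symm
    _ = ∑ k ∈ Finset.range (j + 1),
          (Ioi (qf s m (k + 1))).indicator (fun _ => dfun β u s m k) t :=
        (Finset.sum_congr rfl hterm).symm
    _ ≤ σfun β u s m t := hsum

/-- Step 1 -/
lemma step1 (hn : 1 ≤ n) (hβ : 0 < β) (hup : ∀ t ∈ Ioi (0:ℝ), 0 < u t)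
    {C : ℝ≥0∞}
    (hineq : ∀ g : Rn n → ℝ≥0∞, Measurable g →
        (⨆ (r : ℝ) (_ : 0 < r),
            ENNReal.ofReal (u r) *
              ∫⁻ y in (ball (0 : Rn n) r)ᶜ, ENNReal.ofReal ‖y‖ ^ (-β) * g y) ≤
          C * ⨆ (r : ℝ) (_ : 0 < r),
            ENNReal.ofReal (u r) *
              ⨆ (t : ℝ) (_ : r < t),
                ENNReal.ofReal t ^ (-β) * ∫⁻ y in ball (0 : Rn n) t, g y)
    {s : ℝ} (hs : 0 < s) :
    ENNReal.ofReal (u s) *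
      (ENNReal.ofReal β * ∫⁻ t in Ioi s, ENNReal.ofReal t ^ (-β - 1) * Hmf β u t) ≤ C := by
  set φ : ℕ → ℝ → ℝ≥0∞ := fun m t => ENNReal.ofReal t ^ (-β - 1) * σfun β u s m t with hφ
  have hφmeas : ∀ m, Measurable (φ m) := fun m =>
    (ENNReal.measurable_ofReal.pow_const _).mul (σfun_meas m)
  have hkey : ∀ t ∈ Ioi s, ENNReal.ofReal t ^ (-β - 1) * Hmf β u t
      ≤ liminf (fun m => φ m t) atTop := by
    intro t ht
    rw [Hmf, ENNReal.mul_iSup]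
    refine iSup_le fun t' => ?_
    rw [ENNReal.mul_iSup]
    refine iSup_le fun ht't => ?_
    refine le_liminf_of_le (by isBoundedDefault) ?_
    filter_upwards [sigma_lower hs ht ht't] with m hm
    exact mul_le_mul_right hm _
  calc ENNReal.ofReal (u s) *
        (ENNReal.ofReal β * ∫⁻ t in Ioi s, ENNReal.ofReal t ^ (-β - 1) * Hmf β u t)
      ≤ ENNReal.ofReal (u s) *
        (ENNReal.ofReal β * ∫⁻ t in Ioi s, liminf (fun m => φ m t) atTop) :=
        mul_le_mul_right (mul_le_mul_right
          (setLIntegral_mono' measurableSet_Ioi hkey) _) _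
    _ ≤ ENNReal.ofReal (u s) *
        (ENNReal.ofReal β * liminf (fun m => ∫⁻ t in Ioi s, φ m t) atTop) :=
        mul_le_mul_right (mul_le_mul_right (lintegral_liminf_le hφmeas) _) _
    _ ≤ ENNReal.ofReal (u s) *
        (ENNReal.ofReal β * ⨆ m, ∫⁻ t in Ioi s, φ m t) := by
        refine mul_le_mul_right (mul_le_mul_right ?_ _) _
        exact (liminf_le_limsup (by isBoundedDefault) (by isBoundedDefault)).trans
          (limsup_le_of_le (by isBoundedDefault)
          (Eventually.of_forall fun m => le_iSup (fun m => ∫⁻ t in Ioi s, φ m t) m))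
    _ = ⨆ m, ENNReal.ofReal (u s) * (ENNReal.ofReal β * ∫⁻ t in Ioi s, φ m t) := by
        rw [ENNReal.mul_iSup (f := fun m => ∫⁻ t in Ioi s, φ m t)]
        rw [ENNReal.mul_iSup]
    _ ≤ C := iSup_le fun m => bump_main hn hβ hup hineq hs m

lemma Hmf_ae : ∀ᵐ t : ℝ, Hmf β u t = (A9' β u t)⁻¹ := by
  set H : ℝ → ℝ≥0∞ := fun t => (A9' β u t)⁻¹ with hH
  have hHmono : Monotone H := fun a b hab => ENNReal.inv_le_inv.2 (A9'_antitone hab)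
  have hcount : {x : ℝ | ¬ContinuousAt H x}.Countable := hHmono.countable_not_continuousAt
  have hae : ∀ᵐ t : ℝ, ContinuousAt H t := by
    rw [ae_iff]
    exact measure_mono_null (fun x hx => hx) (hcount.measure_zero volume)
  filter_upwards [hae] with t hcont
  refine le_antisymm (iSup₂_le fun t' h => hHmono h.le) ?_
  have htd : Tendsto H (𝓝[<] t) (𝓝 (H t)) := (hcont.continuousWithinAt).tendsto
  refine le_of_tendsto htd ?_
  filter_upwards [self_mem_nhdsWithin] with t' ht'
  exact show H t' ≤ ⨆ (x : ℝ) (_ : x < t), (A9' β u x)⁻¹ from le_iSup₂_of_le t' ht' le_rfl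

lemma measurable_A9'' : Measurable (A9' β u) := A9'_antitone.measurable

/-- Step 2: forward direction conclusion. -/
lemma forward (hn : 1 ≤ n) (hβ : 0 < β) (hup : ∀ t ∈ Ioi (0:ℝ), 0 < u t)
    {C : ℝ≥0∞} (hCtop : C ≠ ⊤)
    (hineq : ∀ g : Rn n → ℝ≥0∞, Measurable g →
        (⨆ (r : ℝ) (_ : 0 < r),
            ENNReal.ofReal (u r) *
              ∫⁻ y in (ball (0 : Rn n) r)ᶜ, ENNReal.ofReal ‖y‖ ^ (-β) * g y) ≤
          C * ⨆ (r : ℝ) (_ : 0 < r),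
            ENNReal.ofReal (u r) *
              ⨆ (t : ℝ) (_ : r < t),
                ENNReal.ofReal t ^ (-β) * ∫⁻ y in ball (0 : Rn n) t, g y) :
    (⨆ (r : ℝ) (_ : 0 < r),
        ENNReal.ofReal r ^ β * A9' β u r *
          ∫⁻ t in Ioi r, ENNReal.ofReal t ^ (-β - 1) * (A9' β u t)⁻¹) ≠ ⊤ := by
  set I : ℝ → ℝ≥0∞ := fun r => ∫⁻ t in Ioi r, ENNReal.ofReal t ^ (-β - 1) * (A9' β u t)⁻¹
    with hIdef
  have hβ0 : ENNReal.ofReal β ≠ 0 := (ofReal_pos.2 hβ).ne'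
  have hwmeas : Measurable fun t : ℝ => ENNReal.ofReal t ^ (-β - 1) :=
    ENNReal.measurable_ofReal.pow_const _
  have hIanti : Antitone I := fun a b hab => lintegral_mono_set (Ioi_subset_Ioi hab)
  -- step 1 rephrased
  have hI : ∀ s, 0 < s → ENNReal.ofReal (u s) * I s ≤ C * (ENNReal.ofReal β)⁻¹ := by
    intro s hs
    have hcongr : I s = ∫⁻ t in Ioi s, ENNReal.ofReal t ^ (-β - 1) * Hmf β u t := by
      refine lintegral_congr_ae (ae_restrict_of_ae ?_)
      filter_upwards [Hmf_ae (β := β) (u := u)] with t ht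
      rw [ht]
    have h1 : ENNReal.ofReal (u s) * (ENNReal.ofReal β * I s) ≤ C := by
      rw [hcongr]; exact step1 hn hβ hup hineq hs
    calc ENNReal.ofReal (u s) * I s
        = ENNReal.ofReal (u s) * (ENNReal.ofReal β * I s) * (ENNReal.ofReal β)⁻¹ := by
          rw [mul_assoc, mul_assoc, mul_comm (I s), ← mul_assoc (ENNReal.ofReal β),
            ENNReal.mul_inv_cancel hβ0 ofReal_ne_top, one_mul]
      _ ≤ C * (ENNReal.ofReal β)⁻¹ := mul_le_mul_left h1 _
  -- the sup bound
  have hDle : (⨆ (r : ℝ) (_ : 0 < r), ENNReal.ofReal r ^ β * A9' β u r * I r)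
      ≤ C * (ENNReal.ofReal β)⁻¹ + (ENNReal.ofReal β)⁻¹ := by
    refine iSup₂_le fun r hr => ?_
    have hrw : ENNReal.ofReal r ^ β * A9' β u r * I r
        = ⨆ (τ : ℝ) (_ : r < τ),
            ENNReal.ofReal r ^ β * (ENNReal.ofReal τ ^ (-β) * Bf u τ) * I r := by
      rw [A9']
      simp only [ENNReal.mul_iSup, ENNReal.iSup_mul]
    rw [hrw]
    refine iSup₂_le fun τ hτ => ?_
    have hτ0 : 0 < τ := hr.trans hτ
    set P := ∫⁻ t in Ioc r τ, ENNReal.ofReal t ^ (-β - 1) * (A9' β u t)⁻¹ with hPdef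
    have hsplit : I r = P + I τ := by
      rw [hIdef]
      simp only
      rw [← Set.Ioc_union_Ioi_eq_Ioi hτ.le,
        lintegral_union measurableSet_Ioi (Set.Ioc_disjoint_Ioi le_rfl)]
    have hpart1 : ENNReal.ofReal r ^ β * (ENNReal.ofReal τ ^ (-β) * Bf u τ) * I τ
        ≤ C * (ENNReal.ofReal β)⁻¹ := by
      have h1 : ENNReal.ofReal r ^ β * ENNReal.ofReal τ ^ (-β) ≤ 1 := by
        calc ENNReal.ofReal r ^ β * ENNReal.ofReal τ ^ (-β)
            ≤ ENNReal.ofReal τ ^ β * ENNReal.ofReal τ ^ (-β) :=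
              mul_le_mul_left (ENNReal.rpow_le_rpow (ofReal_le_ofReal hτ.le) hβ.le) _
          _ = 1 := rpow_mul_rpow_neg hβ hτ0
      calc ENNReal.ofReal r ^ β * (ENNReal.ofReal τ ^ (-β) * Bf u τ) * I τ
          = (ENNReal.ofReal r ^ β * ENNReal.ofReal τ ^ (-β)) * (Bf u τ * I τ) := by ring
        _ ≤ 1 * (Bf u τ * I τ) := mul_le_mul_left h1 _
        _ = Bf u τ * I τ := one_mul _
        _ ≤ C * (ENNReal.ofReal β)⁻¹ := by
            rw [Bf]
            simp only [ENNReal.iSup_mul]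
            refine iSup_le fun s => iSup_le fun hs => iSup_le fun hsτ => ?_
            calc ENNReal.ofReal (u s) * I τ ≤ ENNReal.ofReal (u s) * I s :=
                mul_le_mul_right (hIanti hsτ.le) _
              _ ≤ C * (ENNReal.ofReal β)⁻¹ := hI s hs
    have hpart2 : ENNReal.ofReal r ^ β * (ENNReal.ofReal τ ^ (-β) * Bf u τ) * P
        ≤ (ENNReal.ofReal β)⁻¹ := by
      have hP : P ≤ (ENNReal.ofReal τ ^ β * (Bf u τ)⁻¹) *
          (ENNReal.ofReal r ^ (-β) * (ENNReal.ofReal β)⁻¹) := by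
        have hptw : ∀ t ∈ Ioc r τ, ENNReal.ofReal t ^ (-β - 1) * (A9' β u t)⁻¹
            ≤ ENNReal.ofReal t ^ (-β - 1) * (ENNReal.ofReal τ ^ β * (Bf u τ)⁻¹) := by
          intro t ht
          refine mul_le_mul_right ?_ _
          have hA : ENNReal.ofReal τ ^ (-β) * Bf u τ ≤ A9' β u t := by
            rcases ht.2.lt_or_eq with h | h
            · exact le_A9' h
            · rw [h]; exact A9'_ge hβ hτ0
          calc (A9' β u t)⁻¹ ≤ (ENNReal.ofReal τ ^ (-β) * Bf u τ)⁻¹ :=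
              ENNReal.inv_le_inv.2 hA
            _ = (ENNReal.ofReal τ ^ (-β))⁻¹ * (Bf u τ)⁻¹ :=
              ENNReal.mul_inv (Or.inl (rpow_neg_pos hβ hτ0).ne')
                (Or.inl (rpow_neg_ne_top hβ hτ0))
            _ = ENNReal.ofReal τ ^ β * (Bf u τ)⁻¹ := by
              rw [ENNReal.rpow_neg, inv_inv]
        calc P ≤ ∫⁻ t in Ioc r τ,
              ENNReal.ofReal t ^ (-β - 1) * (ENNReal.ofReal τ ^ β * (Bf u τ)⁻¹) :=
              setLIntegral_mono' measurableSet_Ioc hptw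
          _ = (ENNReal.ofReal τ ^ β * (Bf u τ)⁻¹) * ∫⁻ t in Ioc r τ,
                ENNReal.ofReal t ^ (-β - 1) := by
              rw [lintegral_mul_const _ hwmeas, mul_comm]
          _ ≤ (ENNReal.ofReal τ ^ β * (Bf u τ)⁻¹) * ∫⁻ t in Ioi r,
                ENNReal.ofReal t ^ (-β - 1) :=
              mul_le_mul_right (lintegral_mono_set Set.Ioc_subset_Ioi_self) _
          _ = (ENNReal.ofReal τ ^ β * (Bf u τ)⁻¹) *
                (ENNReal.ofReal r ^ (-β) * (ENNReal.ofReal β)⁻¹) := by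
              rw [lint_Ioi_rpow hβ hr, div_eq_mul_inv]
      calc ENNReal.ofReal r ^ β * (ENNReal.ofReal τ ^ (-β) * Bf u τ) * P
          ≤ ENNReal.ofReal r ^ β * (ENNReal.ofReal τ ^ (-β) * Bf u τ) *
            ((ENNReal.ofReal τ ^ β * (Bf u τ)⁻¹) *
              (ENNReal.ofReal r ^ (-β) * (ENNReal.ofReal β)⁻¹)) := mul_le_mul_right hP _
        _ = (ENNReal.ofReal r ^ β * ENNReal.ofReal r ^ (-β)) *
            (ENNReal.ofReal τ ^ β * ENNReal.ofReal τ ^ (-β)) *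
            (Bf u τ * (Bf u τ)⁻¹) * (ENNReal.ofReal β)⁻¹ := by ring
        _ ≤ (ENNReal.ofReal β)⁻¹ := by
            rw [rpow_mul_rpow_neg hβ hr, rpow_mul_rpow_neg hβ hτ0, one_mul, one_mul]
            calc Bf u τ * (Bf u τ)⁻¹ * (ENNReal.ofReal β)⁻¹
                ≤ 1 * (ENNReal.ofReal β)⁻¹ :=
                  mul_le_mul_left (ennreal_mul_inv_le_one _) _
              _ = (ENNReal.ofReal β)⁻¹ := one_mul _
    calc ENNReal.ofReal r ^ β * (ENNReal.ofReal τ ^ (-β) * Bf u τ) * I r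
        = ENNReal.ofReal r ^ β * (ENNReal.ofReal τ ^ (-β) * Bf u τ) * P +
          ENNReal.ofReal r ^ β * (ENNReal.ofReal τ ^ (-β) * Bf u τ) * I τ := by
          rw [hsplit, mul_add]
      _ ≤ (ENNReal.ofReal β)⁻¹ + C * (ENNReal.ofReal β)⁻¹ := add_le_add hpart2 hpart1
      _ = C * (ENNReal.ofReal β)⁻¹ + (ENNReal.ofReal β)⁻¹ := add_comm _ _
  exact ne_top_of_le_ne_top (ENNReal.add_ne_top.2
    ⟨ENNReal.mul_ne_top hCtop (ENNReal.inv_ne_top.2 hβ0), ENNReal.inv_ne_top.2 hβ0⟩) hDle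


end Stmt9Aux

/-- Corollary 5.2: the inequality
`sup_{r>0} u(r) ∫_{ℝⁿ∖B(0,r)} |y|^{-β} g(y) dy ≤ C sup_{r>0} u(r) sup_{t>r} t^{-β} ∫_{B(0,t)} g`
holds for all nonnegative measurable `g` iff
`sup_{r>0} r^β A(r) ∫_r^∞ t^{-β-1} A(t)⁻¹ dt < ∞`. -/
theorem stmt9 (n : ℕ) (hn : 1 ≤ n) (β : ℝ) (hβ : 0 < β) (u : ℝ → ℝ)
    (huc : ContinuousOn u (Ioi 0)) (hup : ∀ t ∈ Ioi (0 : ℝ), 0 < u t) :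
    (∃ C : ℝ≥0∞, C ≠ ⊤ ∧ ∀ g : Rn n → ℝ≥0∞, Measurable g →
        (⨆ (r : ℝ) (_ : 0 < r),
            ENNReal.ofReal (u r) *
              ∫⁻ y in (ball (0 : Rn n) r)ᶜ, ENNReal.ofReal ‖y‖ ^ (-β) * g y) ≤
          C * ⨆ (r : ℝ) (_ : 0 < r),
            ENNReal.ofReal (u r) *
              ⨆ (t : ℝ) (_ : r < t),
                ENNReal.ofReal t ^ (-β) * ∫⁻ y in ball (0 : Rn n) t, g y) ↔
      (⨆ (r : ℝ) (_ : 0 < r),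
        ENNReal.ofReal r ^ β * A9 β u r *
          ∫⁻ t in Ioi r, ENNReal.ofReal t ^ (-β - 1) * (A9 β u t)⁻¹) ≠ ⊤ := by
  have hA9 : A9 β u = A9' β u := rfl
  by_cases hA : ∃ r, 0 < r ∧ A9' β u r = ⊤
  · have hAall := A9'_top_forall hβ hA
    constructor
    · intro _
      rw [hA9, case1_rhs hAall]
      exact zero_ne_top
    · intro _
      exact ⟨1, one_ne_top, fun g hg => case1_ineq n hβ hAall g hg⟩
  · push_neg at hA
    have hA' : ∀ r, 0 < r → A9' β u r ≠ ⊤ := fun r hr => hA r hr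
    constructor
    · rintro ⟨C, hCtop, hineq⟩
      rw [hA9]
      exact forward hn hβ hup hCtop hineq
    · intro hD
      rw [hA9] at hD
      exact backward hβ hup hD hA'
end
end

section
/- Let 0 < β < n and let u be a continuous weight function on ℝⁿ × (0,∞). If sup_{x∈ℝⁿ} sup_{0<s<∞} s^{β} · ( sup_{s<y<∞} y^{−β} sup_{0<τ<y} u(x,τ) ) · ∫_s^∞ t^{−β−1} · ( sup_{t<z<∞} z^{−β} sup_{0<τ<z} u(x,τ) )^{−1} dt < ∞, then there is a constant C such that sup_{x∈ℝⁿ} sup_{r>0} u(x,r) ∫_{ℝⁿ∖B(x,r)} g(y) |x−y|^{−β} dy ≤ C · sup_{x∈ℝⁿ} sup_{r>0} u(x,r) ( sup_{t>r} t^{−β} ∫_{B(x,t)} g(y) dy ) for every nonnegative measurable function g on ℝⁿ. -/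
open MeasureTheory ENNReal Set Metric

noncomputable section

/-- `A(x,s) = sup_{s<y<∞} y^{-β} · sup_{0<τ<y} u(x,τ)`. -/
def A10 {n : ℕ} (β : ℝ) (u : Rn n × ℝ → ℝ) (x : Rn n) (s : ℝ) : ℝ≥0∞ :=
  ⨆ (y : ℝ) (_ : s < y),
    ENNReal.ofReal y ^ (-β) *
      ⨆ (τ : ℝ) (_ : 0 < τ) (_ : τ < y), ENNReal.ofReal (u (x, τ))

-- aux lemma 1: sup over y > r of (ofReal y)^(-β) dominates (ofReal r)^(-β)
lemma aux_sup_rpow {β r : ℝ} (hβ : 0 < β) (hr : 0 < r) :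
    ENNReal.ofReal r ^ (-β) ≤ ⨆ (y : ℝ) (_ : r < y), ENNReal.ofReal y ^ (-β) := by
  set f : ℕ → ℝ≥0∞ := fun k => ENNReal.ofReal (r + 1 / ((k : ℝ) + 1)) ^ (-β) with hf
  have hpos : ∀ k : ℕ, 0 < r + 1 / ((k : ℝ) + 1) := by
    intro k; positivity
  have hmono : Monotone f := by
    intro k m hkm
    have h1 : r + 1 / ((m : ℝ) + 1) ≤ r + 1 / ((k : ℝ) + 1) := by
      have : 1 / ((m : ℝ) + 1) ≤ 1 / ((k : ℝ) + 1) := by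
        apply one_div_le_one_div_of_le (by positivity)
        exact_mod_cast by omega
      linarith
    simp only [hf]
    rw [ENNReal.rpow_neg, ENNReal.rpow_neg]
    apply ENNReal.inv_le_inv.2
    exact ENNReal.rpow_le_rpow (ENNReal.ofReal_le_ofReal h1) hβ.le
  have h1 : Filter.Tendsto (fun k : ℕ => r + 1 / ((k : ℝ) + 1)) Filter.atTop (nhds r) := by
    have := tendsto_one_div_add_atTop_nhds_zero_nat (𝕜 := ℝ)
    simpa using tendsto_const_nhds.add this
  have htend : Filter.Tendsto f Filter.atTop (nhds (ENNReal.ofReal r ^ (-β))) := by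
    exact ((ENNReal.continuous_rpow_const.comp ENNReal.continuous_ofReal).continuousAt.tendsto).comp h1
  have hsup : (⨆ k, f k) = ENNReal.ofReal r ^ (-β) :=
    tendsto_nhds_unique (tendsto_atTop_iSup hmono) htend
  rw [← hsup]
  apply iSup_le
  intro k
  have hk : r < r + 1 / ((k : ℝ) + 1) := by
    have : (0:ℝ) < 1 / ((k : ℝ) + 1) := by positivity
    linarith
  exact le_iSup₂_of_le (r + 1 / ((k : ℝ) + 1)) hk le_rfl

-- aux lemma 4: the layer-cake kernel identity
lemma aux_kernel {β d : ℝ} (hβ : 0 < β) (hd : 0 < d) :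
    ENNReal.ofReal β * ∫⁻ t in Ioi d, ENNReal.ofReal t ^ (-β - 1) = ENNReal.ofReal d ^ (-β) := by
  have hlt : -β - 1 < -1 := by linarith
  have h1 : ∫⁻ t in Ioi d, ENNReal.ofReal t ^ (-β - 1)
      = ∫⁻ t in Ioi d, ENNReal.ofReal (t ^ (-β - 1)) := by
    apply setLIntegral_congr_fun measurableSet_Ioi
    intro t ht
    exact ENNReal.ofReal_rpow_of_pos (hd.trans ht)
  have h2 : ∫⁻ t in Ioi d, ENNReal.ofReal (t ^ (-β - 1))
      = ENNReal.ofReal (∫ t in Ioi d, t ^ (-β - 1)) := by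
    rw [ofReal_integral_eq_lintegral_ofReal (integrableOn_Ioi_rpow_of_lt hlt hd)]
    filter_upwards [ae_restrict_mem measurableSet_Ioi] with t ht
    exact Real.rpow_nonneg (hd.trans ht).le _
  rw [h1, h2, integral_Ioi_rpow_of_lt hlt hd, ← ENNReal.ofReal_mul hβ.le,
    ENNReal.ofReal_rpow_of_pos hd]
  congr 1
  rw [show -β - 1 + 1 = -β by ring]
  field_simp

-- aux lemma 2: u(x,r) ≤ r^β * A10(x,r)
lemma aux_A10_lower {n : ℕ} {β : ℝ} (hβ : 0 < β) (u : Rn n × ℝ → ℝ) (x : Rn n) {r : ℝ}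
    (hr : 0 < r) : ENNReal.ofReal (u (x, r)) ≤ ENNReal.ofReal r ^ β * A10 β u x r := by
  have hne : ENNReal.ofReal r ^ β ≠ 0 :=
    (ENNReal.rpow_pos (ENNReal.ofReal_pos.2 hr) ENNReal.ofReal_ne_top).ne'
  have hnt : ENNReal.ofReal r ^ β ≠ ⊤ :=
    (ENNReal.rpow_lt_top_of_nonneg hβ.le ENNReal.ofReal_ne_top).ne
  have key : ENNReal.ofReal r ^ (-β) * ENNReal.ofReal (u (x, r)) ≤ A10 β u x r := by
    have h2 : ∀ y : ℝ, r < y →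
        ENNReal.ofReal y ^ (-β) * ENNReal.ofReal (u (x, r)) ≤ A10 β u x r := by
      intro y hy
      have hτ : ENNReal.ofReal (u (x, r)) ≤
          ⨆ (τ : ℝ) (_ : 0 < τ) (_ : τ < y), ENNReal.ofReal (u (x, τ)) :=
        le_iSup₂_of_le r hr (le_iSup_of_le hy le_rfl)
      exact le_trans (mul_le_mul_right hτ _) (le_iSup₂_of_le y hy le_rfl)
    calc ENNReal.ofReal r ^ (-β) * ENNReal.ofReal (u (x, r))
        ≤ (⨆ (y : ℝ) (_ : r < y), ENNReal.ofReal y ^ (-β)) * ENNReal.ofReal (u (x, r)) :=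
          mul_le_mul_left (aux_sup_rpow hβ hr) _
      _ = ⨆ (y : ℝ) (_ : r < y), ENNReal.ofReal y ^ (-β) * ENNReal.ofReal (u (x, r)) := by
          simp only [ENNReal.iSup_mul]
      _ ≤ A10 β u x r := by
          apply iSup_le; intro y; apply iSup_le; intro hy; exact h2 y hy
  calc ENNReal.ofReal (u (x, r))
      = ENNReal.ofReal r ^ β * (ENNReal.ofReal r ^ (-β) * ENNReal.ofReal (u (x, r))) := by
        rw [← mul_assoc, ENNReal.rpow_neg, ENNReal.mul_inv_cancel hne hnt, one_mul]
    _ ≤ ENNReal.ofReal r ^ β * A10 β u x r := mul_le_mul_right key _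

-- aux lemma 3 : A10 positive
lemma aux_A10_ne_zero {n : ℕ} {β : ℝ} (u : Rn n × ℝ → ℝ) (x : Rn n) {t : ℝ}
    (ht : 0 < t) (hu : 0 < u (x, t)) : A10 β u x t ≠ 0 := by
  have h1 : (0 : ℝ≥0∞) < ENNReal.ofReal (t + 1) ^ (-β) * ENNReal.ofReal (u (x, t)) :=
    ENNReal.mul_pos
      (ENNReal.rpow_pos (ENNReal.ofReal_pos.2 (by linarith)) ENNReal.ofReal_ne_top).ne'
      (ENNReal.ofReal_pos.2 hu).ne'
  have h2 : ENNReal.ofReal (t + 1) ^ (-β) * ENNReal.ofReal (u (x, t)) ≤ A10 β u x t := by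
    have hτ : ENNReal.ofReal (u (x, t)) ≤
        ⨆ (τ : ℝ) (_ : 0 < τ) (_ : τ < t + 1), ENNReal.ofReal (u (x, τ)) :=
      le_iSup₂_of_le t ht (le_iSup_of_le (by linarith) le_rfl)
    exact le_trans (mul_le_mul_right hτ _) (le_iSup₂_of_le (t + 1) (by linarith) le_rfl)
  exact (h1.trans_le h2).ne'

/-- Corollary 5.3: a sufficient condition for the uniform (in `x`)
two-operator inequality. -/
theorem stmt10 (n : ℕ) (hn : 1 ≤ n) (β : ℝ) (hβ0 : 0 < β) (hβn : β < (n : ℝ))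
    (u : Rn n × ℝ → ℝ) (huc : ContinuousOn u (univ ×ˢ Ioi 0))
    (hup : ∀ x : Rn n, ∀ t ∈ Ioi (0 : ℝ), 0 < u (x, t))
    (hcond : (⨆ (x : Rn n) (s : ℝ) (_ : 0 < s),
        ENNReal.ofReal s ^ β * A10 β u x s *
          ∫⁻ t in Ioi s, ENNReal.ofReal t ^ (-β - 1) * (A10 β u x t)⁻¹) ≠ ⊤) :
    ∃ C : ℝ≥0∞, C ≠ ⊤ ∧ ∀ g : Rn n → ℝ≥0∞, Measurable g →
      (⨆ (x : Rn n) (r : ℝ) (_ : 0 < r),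
          ENNReal.ofReal (u (x, r)) *
            ∫⁻ y in (ball x r)ᶜ, g y * ENNReal.ofReal (dist x y) ^ (-β)) ≤
        C * ⨆ (x : Rn n) (r : ℝ) (_ : 0 < r),
          ENNReal.ofReal (u (x, r)) *
            ⨆ (t : ℝ) (_ : r < t), ENNReal.ofReal t ^ (-β) * ∫⁻ y in ball x t, g y := by
  set K := (⨆ (x : Rn n) (s : ℝ) (_ : 0 < s),
      ENNReal.ofReal s ^ β * A10 β u x s *
        ∫⁻ t in Ioi s, ENNReal.ofReal t ^ (-β - 1) * (A10 β u x t)⁻¹) with hKdef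
  refine ⟨ENNReal.ofReal β * K + 1, ?_, ?_⟩
  · exact ENNReal.add_ne_top.2 ⟨ENNReal.mul_ne_top ENNReal.ofReal_ne_top hcond, one_ne_top⟩
  intro g hg
  set F := (⨆ (x : Rn n) (r : ℝ) (_ : 0 < r),
      ENNReal.ofReal (u (x, r)) *
        ⨆ (t : ℝ) (_ : r < t), ENNReal.ofReal t ^ (-β) * ∫⁻ y in ball x t, g y) with hFdef
  by_cases hFtop : F = ⊤
  · rw [hFtop, ENNReal.mul_top (by simp)]; exact le_top
  -- the ball integral bound
  have hball : ∀ (x : Rn n) (t : ℝ), 0 < t → A10 β u x t * ∫⁻ y in ball x t, g y ≤ F := by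
    intro x t ht
    rw [A10, ENNReal.iSup_mul]
    apply iSup_le; intro y
    rw [ENNReal.iSup_mul]
    apply iSup_le; intro hy
    have hsub : ∫⁻ y' in ball x t, g y' ≤ ∫⁻ y' in ball x y, g y' :=
      lintegral_mono' (Measure.restrict_mono (ball_subset_ball hy.le) le_rfl) le_rfl
    calc ENNReal.ofReal y ^ (-β) *
          (⨆ (τ : ℝ) (_ : 0 < τ) (_ : τ < y), ENNReal.ofReal (u (x, τ))) *
          ∫⁻ y' in ball x t, g y'
        ≤ ENNReal.ofReal y ^ (-β) *
          (⨆ (τ : ℝ) (_ : 0 < τ) (_ : τ < y), ENNReal.ofReal (u (x, τ))) *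
          ∫⁻ y' in ball x y, g y' := mul_le_mul_right hsub _
      _ = ⨆ (τ : ℝ) (_ : 0 < τ) (_ : τ < y), ENNReal.ofReal y ^ (-β) *
            ENNReal.ofReal (u (x, τ)) * ∫⁻ y' in ball x y, g y' := by
          simp only [ENNReal.mul_iSup, ENNReal.iSup_mul]
      _ ≤ F := by
          apply iSup_le; intro τ; apply iSup_le; intro hτ; apply iSup_le; intro hτy
          have h1 : ENNReal.ofReal y ^ (-β) * ∫⁻ y' in ball x y, g y' ≤
              ⨆ (t' : ℝ) (_ : τ < t'), ENNReal.ofReal t' ^ (-β) * ∫⁻ y' in ball x t', g y' :=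
            le_iSup₂_of_le y hτy le_rfl
          calc ENNReal.ofReal y ^ (-β) * ENNReal.ofReal (u (x, τ)) * ∫⁻ y' in ball x y, g y'
              = ENNReal.ofReal (u (x, τ)) *
                (ENNReal.ofReal y ^ (-β) * ∫⁻ y' in ball x y, g y') := by ring
            _ ≤ ENNReal.ofReal (u (x, τ)) *
                ⨆ (t' : ℝ) (_ : τ < t'), ENNReal.ofReal t' ^ (-β) * ∫⁻ y' in ball x t', g y' :=
                mul_le_mul_right h1 _
            _ ≤ F := le_iSup₂_of_le x τ (le_iSup_of_le hτ le_rfl)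
  have hballF : ∀ (x : Rn n) (t : ℝ), 0 < t →
      ∫⁻ y in ball x t, g y ≤ F * (A10 β u x t)⁻¹ := by
    intro x t ht
    rw [← div_eq_mul_inv,
      ENNReal.le_div_iff_mul_le (Or.inl (aux_A10_ne_zero u x ht (hup x t ht))) (Or.inr hFtop),
      mul_comm]
    exact hball x t ht
  -- main estimate
  have hmain : ∀ (x : Rn n) (r : ℝ), 0 < r →
      ENNReal.ofReal (u (x, r)) *
        ∫⁻ y in (ball x r)ᶜ, g y * ENNReal.ofReal (dist x y) ^ (-β)
      ≤ ENNReal.ofReal β * K * F := by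
    intro x r hr
    set f : Rn n → ℝ → ℝ≥0∞ := fun y t =>
      (Ioi (dist x y)).indicator (fun t' => g y * ENNReal.ofReal t' ^ (-β - 1)) t with hfdef
    have hfmeas : Measurable (Function.uncurry f) := by
      have : Function.uncurry f = fun p : Rn n × ℝ =>
          ({q : Rn n × ℝ | dist x q.1 < q.2}).indicator
            (fun q => g q.1 * ENNReal.ofReal q.2 ^ (-β - 1)) p := by
        funext p
        simp only [Function.uncurry, hfdef, Set.indicator, Set.mem_Ioi, Set.mem_setOf_eq]
      rw [this]
      apply Measurable.indicator
      · exact (hg.comp measurable_fst).mul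
          ((ENNReal.continuous_rpow_const.measurable.comp ENNReal.measurable_ofReal).comp
            measurable_snd)
      · exact (isOpen_lt ((continuous_const.dist continuous_fst)) continuous_snd).measurableSet
    -- step A1: pointwise identity on (ball x r)ᶜ
    have hA1 : ∫⁻ y in (ball x r)ᶜ, g y * ENNReal.ofReal (dist x y) ^ (-β)
        = ∫⁻ y in (ball x r)ᶜ, ENNReal.ofReal β * ∫⁻ t, f y t := by
      apply setLIntegral_congr_fun measurableSet_ball.compl
      intro y hy
      beta_reduce
      have hd : 0 < dist x y := by
        simp only [Set.mem_compl_iff, mem_ball, not_lt] at hy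
        rw [dist_comm] at hy
        linarith
      have : ∫⁻ t, f y t = g y * ∫⁻ t in Ioi (dist x y), ENNReal.ofReal t ^ (-β - 1) := by
        rw [hfdef]
        simp only
        rw [lintegral_indicator measurableSet_Ioi]
        exact lintegral_const_mul _ (ENNReal.continuous_rpow_const.measurable.comp
          ENNReal.measurable_ofReal)
      rw [this, ← mul_assoc, mul_comm (ENNReal.ofReal β) (g y), mul_assoc,
        aux_kernel hβ0 hd]
    -- step A2: swap
    have hA2 : ∫⁻ y in (ball x r)ᶜ, ∫⁻ t, f y t
        = ∫⁻ t, ∫⁻ y in (ball x r)ᶜ, f y t := by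
      exact lintegral_lintegral_swap (hfmeas.aemeasurable)
    -- step A3: inner integral in y
    have hH : ∀ t : ℝ, ∫⁻ y in (ball x r)ᶜ, f y t
        = ∫⁻ y in ball x t ∩ (ball x r)ᶜ, g y * ENNReal.ofReal t ^ (-β - 1) := by
      intro t
      have : ∀ y : Rn n, f y t
          = (ball x t).indicator (fun y' => g y' * ENNReal.ofReal t ^ (-β - 1)) y := by
        intro y
        simp only [hfdef, Set.indicator, Set.mem_Ioi, mem_ball]
        rw [dist_comm]
      simp only [this]
      rw [lintegral_indicator measurableSet_ball, Measure.restrict_restrict measurableSet_ball]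
    have hH0 : ∀ t : ℝ, t ≤ r → (∫⁻ y in (ball x r)ᶜ, f y t) = 0 := by
      intro t htr
      rw [hH t]
      have : ball x t ∩ (ball x r)ᶜ = ∅ := by
        apply Set.eq_empty_of_subset_empty
        intro y hy
        exact hy.2 (ball_subset_ball htr hy.1)
      rw [this, Measure.restrict_empty, lintegral_zero_measure]
    -- step A4: restrict to Ioi r
    have hA4 : ∫⁻ t, ∫⁻ y in (ball x r)ᶜ, f y t
        = ∫⁻ t in Ioi r, ∫⁻ y in (ball x r)ᶜ, f y t := by
      rw [← lintegral_indicator measurableSet_Ioi]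
      apply lintegral_congr
      intro t
      by_cases ht : t ∈ Ioi r
      · rw [Set.indicator_of_mem ht]
      · rw [Set.indicator_of_notMem ht, hH0 t (by simpa using ht)]
    -- step A5: bound
    have hA5 : ∫⁻ t in Ioi r, ∫⁻ y in (ball x r)ᶜ, f y t
        ≤ F * ∫⁻ t in Ioi r, ENNReal.ofReal t ^ (-β - 1) * (A10 β u x t)⁻¹ := by
      rw [← lintegral_const_mul' F _ hFtop]
      apply lintegral_mono_ae
      filter_upwards [ae_restrict_mem measurableSet_Ioi] with t ht
      have ht0 : 0 < t := hr.trans ht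
      rw [hH t]
      calc ∫⁻ y in ball x t ∩ (ball x r)ᶜ, g y * ENNReal.ofReal t ^ (-β - 1)
          ≤ ∫⁻ y in ball x t, g y * ENNReal.ofReal t ^ (-β - 1) :=
            lintegral_mono' (Measure.restrict_mono Set.inter_subset_left le_rfl) le_rfl
        _ = (∫⁻ y in ball x t, g y) * ENNReal.ofReal t ^ (-β - 1) :=
            lintegral_mul_const' _ _ (by
              rw [ENNReal.ofReal_rpow_of_pos ht0]; exact ENNReal.ofReal_ne_top)
        _ ≤ (F * (A10 β u x t)⁻¹) * ENNReal.ofReal t ^ (-β - 1) :=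
            mul_le_mul_left (hballF x t ht0) _
        _ = F * (ENNReal.ofReal t ^ (-β - 1) * (A10 β u x t)⁻¹) := by ring
    -- combine
    have hI : ∫⁻ y in (ball x r)ᶜ, g y * ENNReal.ofReal (dist x y) ^ (-β)
        ≤ ENNReal.ofReal β *
          (F * ∫⁻ t in Ioi r, ENNReal.ofReal t ^ (-β - 1) * (A10 β u x t)⁻¹) := by
      rw [hA1, lintegral_const_mul' (ENNReal.ofReal β) _ ENNReal.ofReal_ne_top, hA2, hA4]
      exact mul_le_mul_right hA5 _
    have hKbd : ENNReal.ofReal r ^ β * A10 β u x r *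
        ∫⁻ t in Ioi r, ENNReal.ofReal t ^ (-β - 1) * (A10 β u x t)⁻¹ ≤ K := by
      rw [hKdef]
      exact le_iSup_of_le x (le_iSup_of_le r (le_iSup_of_le hr le_rfl))
    calc ENNReal.ofReal (u (x, r)) *
          ∫⁻ y in (ball x r)ᶜ, g y * ENNReal.ofReal (dist x y) ^ (-β)
        ≤ ENNReal.ofReal (u (x, r)) *
          (ENNReal.ofReal β *
            (F * ∫⁻ t in Ioi r, ENNReal.ofReal t ^ (-β - 1) * (A10 β u x t)⁻¹)) :=
          mul_le_mul_right hI _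
      _ = ENNReal.ofReal β * F * (ENNReal.ofReal (u (x, r)) *
            ∫⁻ t in Ioi r, ENNReal.ofReal t ^ (-β - 1) * (A10 β u x t)⁻¹) := by ring
      _ ≤ ENNReal.ofReal β * F * (ENNReal.ofReal r ^ β * A10 β u x r *
            ∫⁻ t in Ioi r, ENNReal.ofReal t ^ (-β - 1) * (A10 β u x t)⁻¹) :=
          mul_le_mul_right (mul_le_mul_left (aux_A10_lower hβ0 u x hr) _) _
      _ ≤ ENNReal.ofReal β * F * K := mul_le_mul_right hKbd _
      _ = ENNReal.ofReal β * K * F := by ring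
  calc (⨆ (x : Rn n) (r : ℝ) (_ : 0 < r),
        ENNReal.ofReal (u (x, r)) *
          ∫⁻ y in (ball x r)ᶜ, g y * ENNReal.ofReal (dist x y) ^ (-β))
      ≤ ENNReal.ofReal β * K * F := by
        apply iSup_le; intro x; apply iSup_le; intro r; apply iSup_le; intro hr
        exact hmain x r hr
    _ ≤ (ENNReal.ofReal β * K + 1) * F := mul_le_mul_left le_self_add F
end
end
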